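/- arXiv:1412.3068 — 9 statements merged into one kernel-verified Lean document; each statement's English description precedes it below -/
import Mathlib

section
/- Let X be a finite set with at least two elements and let 𝒜 be a set-arrangement on X that contains every two-element subset of X which is not a proper subset of any member of 𝒜. Then the collection ℐ consisting of all subsets of X with at most two elements together with all three-element subsets of X that are not contained in any member of 𝒜 is the family of independent sets of a (simple) matroid on X. -/
/-- A set-arrangement on `X`: every member has at least two elements, two distinct members
meet in at most one element, and the union of all members is `X`. -/
def IsSetArrangement {X : Type*} (𝒜 : Set (Set X)) : Prop :=
  (∀ A ∈ 𝒜, 2 ≤ A.ncard) ∧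
    (∀ A ∈ 𝒜, ∀ B ∈ 𝒜, A ≠ B → (A ∩ B).Subsingleton) ∧
    ⋃₀ 𝒜 = Set.univ

/-- If `𝒜` is a set-arrangement on a finite set `X` with at least two elements, containing
every two-element subset of `X` which is not a proper subset of a member of `𝒜`, then the
collection of all subsets of `X` with at most two elements, together with all three-element
subsets of `X` not contained in any member of `𝒜`, is the family of independent sets of a
matroid on `X`. -/
theorem statement0 {X : Type*} [Fintype X] [Nontrivial X] (𝒜 : Set (Set X))
    (h𝒜 : IsSetArrangement 𝒜)
    (hpairs : ∀ P : Set X, P.ncard = 2 → (∀ A ∈ 𝒜, ¬P ⊂ A) → P ∈ 𝒜) :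
    ∃ M : Matroid X, M.E = Set.univ ∧
      ∀ I : Set X, M.Indep I ↔ (I.ncard ≤ 2 ∨ (I.ncard = 3 ∧ ∀ A ∈ 𝒜, ¬I ⊆ A)) := by
  obtain ⟨hcard, hmeet, -⟩ := h𝒜
  set Ind : Set X → Prop :=
    fun I => I.ncard ≤ 2 ∨ (I.ncard = 3 ∧ ∀ A ∈ 𝒜, ¬I ⊆ A) with hInd
  have indep_empty : Ind ∅ := Or.inl (by simp)
  have indep_subset : ∀ ⦃I J : Set X⦄, Ind J → I ⊆ J → Ind I := by
    rintro I J (hJ | ⟨hJ3, hJA⟩) hIJ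
    · exact Or.inl (le_trans (Set.ncard_le_ncard hIJ J.toFinite) hJ)
    · rcases le_or_gt I.ncard 2 with h | h
      · exact Or.inl h
      · have hle : I.ncard ≤ 3 := hJ3 ▸ Set.ncard_le_ncard hIJ J.toFinite
        have h3 : I.ncard = 3 := le_antisymm hle h
        have : I = J := Set.eq_of_subset_of_ncard_le hIJ (by omega) J.toFinite
        exact Or.inr ⟨h3, this ▸ hJA⟩
  have indep_aug : ∀ ⦃I J : Set X⦄, Ind I → Ind J → I.ncard < J.ncard →
      ∃ e ∈ J, e ∉ I ∧ Ind (insert e I) := by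
    intro I J hI hJ hlt
    rcases le_or_gt I.ncard 1 with h1 | h1
    · obtain ⟨e, heJ, heI⟩ := Set.exists_mem_notMem_of_ncard_lt_ncard hlt I.toFinite
      refine ⟨e, heJ, heI, Or.inl ?_⟩
      have := Set.ncard_insert_le e I
      omega
    · -- I.ncard ≥ 2
      have hJ3 : J.ncard = 3 ∧ ∀ A ∈ 𝒜, ¬J ⊆ A := by
        rcases hJ with h | h
        · rcases hI with h' | h' <;> omega
        · exact h
      have hI2 : I.ncard = 2 := by
        rcases hI with h | h
        · omega
        · omega
      -- there is a unique member of 𝒜 containing I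
      have hexists : ∃ A ∈ 𝒜, I ⊆ A := by
        by_cases hmem : I ∈ 𝒜
        · exact ⟨I, hmem, subset_rfl⟩
        · by_contra hcon
          push_neg at hcon
          exact hmem (hpairs I hI2 (fun A hA hsub => hcon A hA hsub.subset))
      obtain ⟨A, hA, hIA⟩ := hexists
      obtain ⟨e, heJ, heA⟩ : ∃ e ∈ J, e ∉ A := by
        by_contra hcon
        push_neg at hcon
        exact hJ3.2 A hA hcon
      have heI : e ∉ I := fun h => heA (hIA h)
      refine ⟨e, heJ, heI, Or.inr ⟨?_, ?_⟩⟩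
      · rw [Set.ncard_insert_of_notMem heI I.toFinite, hI2]
      · intro B hB hsub
        have hIB : I ⊆ B := (Set.subset_insert e I).trans hsub
        have hAB : A = B := by
          by_contra hne
          have hsub2 : I ⊆ A ∩ B := Set.subset_inter hIA hIB
          have := Set.ncard_le_ncard hsub2 (A ∩ B).toFinite
          have h1 : (A ∩ B).ncard ≤ 1 :=
            (Set.ncard_le_one (A ∩ B).toFinite).mpr (fun a ha b hb => hmeet A hA B hB hne ha hb)
          omega
        exact heA (hAB ▸ hsub (Set.mem_insert e I))
  refine ⟨(IndepMatroid.ofFinite (E := (Set.univ : Set X)) Set.finite_univ Ind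
      indep_empty indep_subset indep_aug (fun I _ => Set.subset_univ I)).matroid, rfl, ?_⟩
  intro I
  simp [IndepMatroid.matroid_indep_iff, Ind]
end

section
/- Let X be a finite set with at least two elements and let 𝒜 be a set-arrangement on X that contains every two-element subset of X which is not a proper subset of any member of 𝒜. Let ℳ be the matroid on X whose independent sets are all subsets of X with at most two elements together with all three-element subsets of X not contained in any member of 𝒜. Then 𝒜 is exactly the set of 2-flats of ℳ, i.e., the flats of ℳ of rank 2. -/
/-- If `𝒜` is a set-arrangement on a finite set `X` with at least two elements, containing
every two-element subset of `X` which is not a proper subset of a member of `𝒜`, and `M` is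
the matroid on `X` whose independent sets are the subsets of `X` with at most two elements
together with the three-element subsets not contained in any member of `𝒜`, then `𝒜` is
exactly the set of 2-flats of `M`, i.e. the maximal sets containing no independent
three-element subset. -/
theorem statement1 {X : Type*} [Fintype X] [Nontrivial X] (𝒜 : Set (Set X))
    (h𝒜 : IsSetArrangement 𝒜)
    (hpairs : ∀ P : Set X, P.ncard = 2 → (∀ A ∈ 𝒜, ¬P ⊂ A) → P ∈ 𝒜)
    (M : Matroid X) (hE : M.E = Set.univ)
    (hIndep : ∀ I : Set X, M.Indep I ↔ (I.ncard ≤ 2 ∨ (I.ncard = 3 ∧ ∀ A ∈ 𝒜, ¬I ⊆ A))) :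
    𝒜 = {F : Set X | Maximal (fun S : Set X => ¬∃ T ⊆ S, T.ncard = 3 ∧ M.Indep T) F} := by
  obtain ⟨hcard, hmeet, -⟩ := h𝒜
  have hP : ∀ S : Set X, (¬∃ T ⊆ S, T.ncard = 3 ∧ M.Indep T) ↔
      ∀ T ⊆ S, T.ncard = 3 → ∃ A ∈ 𝒜, T ⊆ A := by
    intro S
    constructor
    · intro h T hTS hT3
      by_contra hc
      push_neg at hc
      exact h ⟨T, hTS, hT3, (hIndep T).2 (Or.inr ⟨hT3, hc⟩)⟩
    · rintro h ⟨T, hTS, hT3, hTind⟩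
      rcases (hIndep T).1 hTind with h2 | ⟨-, hnotin⟩
      · omega
      · obtain ⟨A, hA, hTA⟩ := h T hTS hT3
        exact hnotin A hA hTA
  have key : ∀ A ∈ 𝒜, ∀ a b x : X, a ∈ A → b ∈ A → a ≠ b →
      (∃ B ∈ 𝒜, ({a, b, x} : Set X) ⊆ B) → x ∈ A := by
    rintro A hA a b x ha hb hab ⟨B, hB, hsub⟩
    rcases eq_or_ne B A with rfl | hBA
    · exact hsub (by simp)
    · exact absurd (hmeet A hA B hB hBA.symm ⟨ha, hsub (by simp)⟩ ⟨hb, hsub (by simp)⟩) hab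
  have hPA : ∀ A ∈ 𝒜, ¬∃ T ⊆ A, T.ncard = 3 ∧ M.Indep T := by
    intro A hA
    rw [hP]
    exact fun T hTA _ => ⟨A, hA, hTA⟩
  ext F
  simp only [Set.mem_setOf_eq]
  constructor
  · intro hF
    constructor
    · exact hPA F hF
    · intro S hS hFS x hx
      rw [hP] at hS
      obtain ⟨a, b, ha, hb, hab⟩ := (Set.one_lt_ncard_iff F.toFinite).1
        (by have := hcard F hF; omega : 1 < F.ncard)
      rcases eq_or_ne x a with rfl | hxa
      · exact ha
      rcases eq_or_ne x b with rfl | hxb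
      · exact hb
      have hT3 : ({a, b, x} : Set X).ncard = 3 :=
        Set.ncard_eq_three.2 ⟨a, b, x, hab, Ne.symm hxa, Ne.symm hxb, rfl⟩
      have := hS {a, b, x} (by
        intro y hy
        rcases hy with rfl | rfl | rfl
        · exact hFS ha
        · exact hFS hb
        · exact hx) hT3
      exact key F hF a b x ha hb hab this
  · rintro ⟨hPF, hmax⟩
    have hP' := (hP F).1 hPF
    -- F has at least 2 elements
    have h2 : 2 ≤ F.ncard := by
      by_contra h1
      push_neg at h1
      have hlt : F.ncard < Fintype.card X := by
        have : 2 ≤ Fintype.card X := Fintype.one_lt_card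
        omega
      obtain ⟨c, hc⟩ : ∃ c, c ∉ F := by
        by_contra hall
        push_neg at hall
        have : F = Set.univ := Set.eq_univ_of_forall hall
        rw [this, Set.ncard_univ, Nat.card_eq_fintype_card] at hlt
        omega
      have hS : ¬∃ T ⊆ insert c F, T.ncard = 3 ∧ M.Indep T := by
        rw [hP]
        intro T hT hT3
        have : T.ncard ≤ (insert c F).ncard := Set.ncard_le_ncard hT (Set.toFinite _)
        have : (insert c F).ncard ≤ F.ncard + 1 := Set.ncard_insert_le _ _
        omega
      exact hc (hmax hS (Set.subset_insert c F) (Set.mem_insert c F))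
    rcases eq_or_lt_of_le h2 with h2' | h3
    · -- |F| = 2
      refine hpairs F h2'.symm ?_
      intro A hA hFA
      exact hFA.2 (hmax (hPA A hA) hFA.1)
    · -- |F| ≥ 3
      obtain ⟨T, hTF, hT3⟩ := Set.exists_subset_card_eq h3
      obtain ⟨A, hA, hTA⟩ := hP' T hTF hT3
      obtain ⟨a, b, c, hab, hac, hbc, rfl⟩ := Set.ncard_eq_three.1 hT3
      have hFA : F ⊆ A := by
        intro x hx
        rcases eq_or_ne x a with rfl | hxa
        · exact hTA (by simp)
        rcases eq_or_ne x b with rfl | hxb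
        · exact hTA (by simp)
        have hT3' : ({a, b, x} : Set X).ncard = 3 :=
          Set.ncard_eq_three.2 ⟨a, b, x, hab, Ne.symm hxa, Ne.symm hxb, rfl⟩
        have hsub : ({a, b, x} : Set X) ⊆ F := by
          intro y hy
          rcases hy with rfl | rfl | rfl
          · exact hTF (by simp)
          · exact hTF (by simp)
          · exact hx
        exact key A hA a b x (hTA (by simp)) (hTA (by simp)) hab (hP' _ hsub hT3')
      have : A ⊆ F := hmax (hPA A hA) hFA
      rwa [Set.Subset.antisymm hFA this]
end

section
/- Let L be a Lie algebra of a set-arrangement 𝒜 on X and let A ∈ 𝒜. The Lie algebra morphism from the free Lie algebra F(X) to the localized Lie algebra L_A = F(A)/⟨R_A⟩ that sends each generator in A to its class and every generator not in A to zero annihilates the defining ideal of L; hence it induces a Lie algebra morphism π_A : L → L_A satisfying π_A ∘ s_A = id_{L_A}, where s_A : L_A → L is the natural morphism induced by the inclusion A ⊆ X. -/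
open FreeLieAlgebra

variable (C : Type*) [CommRing C] {X : Type*}

/-- The inclusion `F(A) → F(X)` of free Lie algebras. -/
noncomputable def inclX (A : Set X) : FreeLieAlgebra C A →ₗ⁅C⁆ FreeLieAlgebra C X :=
  FreeLieAlgebra.lift C fun a => FreeLieAlgebra.of C (a : X)

/-- The inclusion `F(A) → F(S)` of free Lie algebras along `A ⊆ S`. -/
noncomputable def inclSub {A S : Set X} (h : A ⊆ S) :
    FreeLieAlgebra C A →ₗ⁅C⁆ FreeLieAlgebra C S :=
  FreeLieAlgebra.lift C fun a => FreeLieAlgebra.of C (⟨a.1, h a.2⟩ : S)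

/-- Admissibility of the relations: `R_A ⊆ [F(A), F(A)]`. -/
def AdmissibleRel (𝒜 : Set (Set X)) (Rel : ∀ A : Set X, Set (FreeLieAlgebra C A)) : Prop :=
  ∀ A ∈ 𝒜, Rel A ⊆ (LieAlgebra.derivedSeries C (FreeLieAlgebra C A) 1 : Set (FreeLieAlgebra C A))

/-- The defining ideal of a Lie algebra of a set-arrangement: generated by all `⁅x,y⁆` for
pairs not contained in any member of `𝒜`, together with the relations `R_A`, `A ∈ 𝒜`. -/
noncomputable def definingIdeal (𝒜 : Set (Set X)) (Rel : ∀ A : Set X, Set (FreeLieAlgebra C A)) :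
    LieIdeal C (FreeLieAlgebra C X) :=
  LieSubmodule.lieSpan C (FreeLieAlgebra C X)
    ({z | ∃ x y : X, (∀ A ∈ 𝒜, ¬({x, y} : Set X) ⊆ A) ∧ z = ⁅of C x, of C y⁆} ∪
      ⋃ A, ⋃ (_ : A ∈ 𝒜), inclX C A '' Rel A)

/-- The Lie algebra `L` of the set-arrangement `𝒜` with relations `Rel`. -/
noncomputable abbrev ArrLie (𝒜 : Set (Set X)) (Rel : ∀ A : Set X, Set (FreeLieAlgebra C A)) :=
  FreeLieAlgebra C X ⧸ definingIdeal C 𝒜 Rel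

/-- The quotient map `F(X) → L`. -/
noncomputable def arrMk (𝒜 : Set (Set X)) (Rel : ∀ A : Set X, Set (FreeLieAlgebra C A)) :
    FreeLieAlgebra C X → ArrLie C 𝒜 Rel :=
  LieSubmodule.Quotient.mk (N := definingIdeal C 𝒜 Rel)

/-- The ideal `⟨R_A⟩` of `F(A)`. -/
noncomputable def locIdeal (A : Set X) (Rel : ∀ A : Set X, Set (FreeLieAlgebra C A)) :
    LieIdeal C (FreeLieAlgebra C A) :=
  LieSubmodule.lieSpan C (FreeLieAlgebra C A) (Rel A)

/-- The localized Lie algebra `L_A = F(A)/⟨R_A⟩`. -/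
noncomputable abbrev LocLie (A : Set X) (Rel : ∀ A : Set X, Set (FreeLieAlgebra C A)) :=
  FreeLieAlgebra C A ⧸ locIdeal C A Rel

/-- The quotient map `F(A) → L_A`. -/
noncomputable def locMk (A : Set X) (Rel : ∀ A : Set X, Set (FreeLieAlgebra C A)) :
    FreeLieAlgebra C A → LocLie C A Rel :=
  LieSubmodule.Quotient.mk (N := locIdeal C A Rel)

open Classical in
/-- The canonical Lie algebra map `F(X) → L_A` killing the generators outside `A`. -/
noncomputable def locProj (A : Set X) (Rel : ∀ A : Set X, Set (FreeLieAlgebra C A)) :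
    FreeLieAlgebra C X →ₗ⁅C⁆ LocLie C A Rel :=
  FreeLieAlgebra.lift C fun x : X =>
    if h : x ∈ A then locMk C A Rel (of C (⟨x, h⟩ : A)) else 0

/-- The replacement condition. -/
def ReplacementCond (𝒜 : Set (Set X)) (Rel : ∀ A : Set X, Set (FreeLieAlgebra C A)) : Prop :=
  ∀ A ∈ 𝒜, 3 ≤ A.ncard → ∀ x ∈ A, (∃ B ∈ 𝒜, B ≠ A ∧ x ∈ B) →
    (LieAlgebra.derivedSeries C (LocLie C A Rel) 1 : Set (LocLie C A Rel)) ⊆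
      (LieSubalgebra.lieSpan C (LocLie C A Rel)
        {z | ∃ a : A, (a : X) ≠ x ∧ z = locMk C A Rel (of C a)} : Set (LocLie C A Rel))

/-- Lie monomials of weight `n` with respect to a weighting `d` of the generators. -/
inductive IsLieMonomial (d : X → ℕ) : FreeLieAlgebra C X → ℕ → Prop
  | of (x : X) : IsLieMonomial d (of C x) (d x)
  | lie {u v : FreeLieAlgebra C X} {m n : ℕ} :
      IsLieMonomial d u m → IsLieMonomial d v n → IsLieMonomial d ⁅u, v⁆ (m + n)

/-- Homogeneity of an element of the free Lie algebra with respect to a weighting. -/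
def IsHomogeneous (d : X → ℕ) (r : FreeLieAlgebra C X) : Prop :=
  ∃ n : ℕ, r ∈ Submodule.span C {u | IsLieMonomial C d u n}

/-- The support of a sub-arrangement. -/
def arrSupp {X : Type*} (ℬ : Set (Set X)) : Set X := ⋃₀ ℬ

/-- `ℬ` is a closed sub-arrangement of `𝒜`. -/
def IsClosedSub {X : Type*} (𝒜 ℬ : Set (Set X)) : Prop :=
  ℬ ⊆ 𝒜 ∧ ∀ A ∈ 𝒜, A ∉ ℬ → (A ∩ arrSupp ℬ).Subsingleton

/-- The relations `R_ℬ` of a sub-arrangement. -/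
noncomputable def subRel (ℬ : Set (Set X)) (Rel : ∀ A : Set X, Set (FreeLieAlgebra C A)) :
    Set (FreeLieAlgebra C (arrSupp ℬ)) :=
  (⋃ B, ⋃ h : B ∈ ℬ, inclSub C (Set.subset_sUnion_of_mem h) '' Rel B) ∪
    {z | ∃ x y : arrSupp ℬ, (∀ B ∈ ℬ, ¬({(x : X), (y : X)} : Set X) ⊆ B) ∧
      z = ⁅of C x, of C y⁆}

/-- The ideal `⟨R_ℬ⟩` of `F(supp ℬ)`. -/
noncomputable def subIdeal (ℬ : Set (Set X)) (Rel : ∀ A : Set X, Set (FreeLieAlgebra C A)) :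
    LieIdeal C (FreeLieAlgebra C (arrSupp ℬ)) :=
  LieSubmodule.lieSpan C (FreeLieAlgebra C (arrSupp ℬ)) (subRel C ℬ Rel)

/-- The localized Lie algebra `L_ℬ` at a sub-arrangement. -/
noncomputable abbrev SubLie (ℬ : Set (Set X)) (Rel : ∀ A : Set X, Set (FreeLieAlgebra C A)) :=
  FreeLieAlgebra C (arrSupp ℬ) ⧸ subIdeal C ℬ Rel

/-- The quotient map `F(supp ℬ) → L_ℬ`. -/
noncomputable def subMk (ℬ : Set (Set X)) (Rel : ∀ A : Set X, Set (FreeLieAlgebra C A)) :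
    FreeLieAlgebra C (arrSupp ℬ) → SubLie C ℬ Rel :=
  LieSubmodule.Quotient.mk (N := subIdeal C ℬ Rel)

open Classical in
/-- The canonical Lie algebra map `F(X) → L_ℬ` killing the generators outside `supp ℬ`. -/
noncomputable def subProj (ℬ : Set (Set X)) (Rel : ∀ A : Set X, Set (FreeLieAlgebra C A)) :
    FreeLieAlgebra C X →ₗ⁅C⁆ SubLie C ℬ Rel :=
  FreeLieAlgebra.lift C fun x : X =>
    if h : x ∈ arrSupp ℬ then subMk C ℬ Rel (of C (⟨x, h⟩ : arrSupp ℬ)) else 0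

section Aux

variable {C : Type*} [CommRing C]

/-- Elements of the free Lie algebra land in any Lie subalgebra containing the generators. -/
theorem lift_mem_aux {Y : Type*} {L : Type*} [LieRing L] [LieAlgebra C L]
    (g : Y → L) (K : LieSubalgebra C L) (hg : ∀ y, g y ∈ K) (u : FreeLieAlgebra C Y) :
    FreeLieAlgebra.lift C g u ∈ K := by
  have h : K.incl.comp (FreeLieAlgebra.lift C fun y => (⟨g y, hg y⟩ : K)) =
      FreeLieAlgebra.lift C g := by
    apply FreeLieAlgebra.hom_ext
    intro y
    simp only [LieHom.coe_comp, Function.comp_apply, FreeLieAlgebra.lift_of_apply]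
    rfl
  rw [← h]
  exact ((FreeLieAlgebra.lift C fun y => (⟨g y, hg y⟩ : K)) u).2

/-- If a Lie hom has abelian-spanning image on generators, it kills the derived subalgebra. -/
theorem derived_ker_aux {L L' : Type*} [LieRing L] [LieAlgebra C L] [LieRing L'] [LieAlgebra C L']
    (f : L →ₗ⁅C⁆ L') (h : ∀ u v : L, ⁅f u, f v⁆ = 0) :
    ∀ r ∈ LieAlgebra.derivedSeries C L 1, f r = 0 := by
  have hle : LieAlgebra.derivedSeries C L 1 ≤ f.ker := by
    rw [LieAlgebra.derivedSeries_def, LieAlgebra.derivedSeriesOfIdeal_succ,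
      LieAlgebra.derivedSeriesOfIdeal_zero, LieSubmodule.lieIdeal_oper_eq_span,
      LieSubmodule.lieSpan_le]
    rintro z ⟨x, y, rfl⟩
    simp only [SetLike.mem_coe, LieHom.mem_ker, LieHom.map_lie]
    exact h _ _
  intro r hr
  exact LieHom.mem_ker.mp (hle hr)

/-- The span of a set whose elements pairwise bracket to zero is a Lie subalgebra. -/
noncomputable def abelianSpan {L : Type*} [LieRing L] [LieAlgebra C L] (T : Set L)
    (hT : ∀ a ∈ T, ∀ b ∈ T, ⁅a, b⁆ = 0) : LieSubalgebra C L :=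
  { Submodule.span C T with
    lie_mem' := by
      intro x y hx hy
      have key : ∀ x ∈ Submodule.span C T, ∀ y ∈ Submodule.span C T, ⁅x, y⁆ = (0 : L) := by
        intro x hx
        induction hx using Submodule.span_induction with
        | mem a ha =>
          intro y hy
          induction hy using Submodule.span_induction with
          | mem b hb => exact hT a ha b hb
          | zero => simp
          | add y₁ y₂ _ _ h₁ h₂ => rw [lie_add, h₁, h₂, add_zero]
          | smul c y₁ _ h₁ => rw [lie_smul, h₁, smul_zero]
        | zero => intro y hy; simp
        | add x₁ x₂ _ _ h₁ h₂ => intro y hy; rw [add_lie, h₁ y hy, h₂ y hy, add_zero]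
        | smul c x₁ _ h₁ => intro y hy; rw [smul_lie, h₁ y hy, smul_zero]
      rw [key x hx y hy]
      exact Submodule.zero_mem _ }

theorem mem_abelianSpan {L : Type*} [LieRing L] [LieAlgebra C L] {T : Set L}
    {hT : ∀ a ∈ T, ∀ b ∈ T, ⁅a, b⁆ = 0} {x : L} :
    x ∈ abelianSpan (C := C) T hT ↔ x ∈ Submodule.span C T := Iff.rfl

/-- The quotient by a Lie ideal, as a morphism of Lie algebras. -/
noncomputable def idealMkHom {L : Type*} [LieRing L] [LieAlgebra C L] (I : LieIdeal C L) :
    L →ₗ⁅C⁆ L ⧸ I :=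
  { (I : Submodule C L).mkQ with
    map_lie' := by intro x y; exact LieSubmodule.Quotient.mk_bracket I x y }

theorem idealMkHom_apply {L : Type*} [LieRing L] [LieAlgebra C L] (I : LieIdeal C L) (x : L) :
    idealMkHom I x = LieSubmodule.Quotient.mk (N := I) x := rfl

end Aux

section Aux2

variable {C : Type*} [CommRing C]

theorem span_lie_zero_aux {L : Type*} [LieRing L] [LieAlgebra C L] {T : Set L}
    (hT : ∀ a ∈ T, ∀ b ∈ T, ⁅a, b⁆ = 0) :
    ∀ x ∈ Submodule.span C T, ∀ y ∈ Submodule.span C T, ⁅x, y⁆ = (0 : L) := by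
  intro x hx
  induction hx using Submodule.span_induction with
  | mem a ha =>
    intro y hy
    induction hy using Submodule.span_induction with
    | mem b hb => exact hT a ha b hb
    | zero => simp
    | add y₁ y₂ _ _ h₁ h₂ => rw [lie_add, h₁, h₂, add_zero]
    | smul c y₁ _ h₁ => rw [lie_smul, h₁, smul_zero]
  | zero => intro y hy; simp
  | add x₁ x₂ _ _ h₁ h₂ => intro y hy; rw [add_lie, h₁ y hy, h₂ y hy, add_zero]
  | smul c x₁ _ h₁ => intro y hy; rw [smul_lie, h₁ y hy, smul_zero]

/-- Lifting a Lie algebra morphism over a quotient by an ideal contained in its kernel. -/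
noncomputable def idealLift {L L' : Type*} [LieRing L] [LieAlgebra C L] [LieRing L']
    [LieAlgebra C L'] (I : LieIdeal C L) (f : L →ₗ⁅C⁆ L') (h : I ≤ f.ker) :
    (L ⧸ I) →ₗ⁅C⁆ L' :=
  { (I : Submodule C L).liftQ f.toLinearMap (fun x hx => LieHom.mem_ker.mp (h hx)) with
    map_lie' := by
      rintro ⟨x⟩ ⟨y⟩
      exact f.map_lie x y }

theorem idealLift_mk {L L' : Type*} [LieRing L] [LieAlgebra C L] [LieRing L']
    [LieAlgebra C L'] (I : LieIdeal C L) (f : L →ₗ⁅C⁆ L') (h : I ≤ f.ker) (x : L) :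
    idealLift I f h (LieSubmodule.Quotient.mk (N := I) x) = f x := rfl

end Aux2

/-- The Lie algebra morphism `F(X) → L_A` sending generators in `A` to their classes and
generators outside `A` to zero annihilates the defining ideal of `L`; hence it induces a
Lie algebra morphism `π_A : L → L_A` with `π_A ∘ s_A = id`. -/
theorem statement2 {C : Type*} [CommRing C] {X : Type*} [Fintype X]
    (𝒜 : Set (Set X)) (Rel : ∀ A : Set X, Set (FreeLieAlgebra C A))
    (h𝒜 : IsSetArrangement 𝒜) (hRel : AdmissibleRel C 𝒜 Rel)
    (A : Set X) (hA : A ∈ 𝒜)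
    (sA : LocLie C A Rel →ₗ⁅C⁆ ArrLie C 𝒜 Rel)
    (hsA : ∀ a : A, sA (locMk C A Rel (of C a)) = arrMk C 𝒜 Rel (of C (a : X))) :
    (∀ z ∈ definingIdeal C 𝒜 Rel, locProj C A Rel z = 0) ∧
      ∃ πA : ArrLie C 𝒜 Rel →ₗ⁅C⁆ LocLie C A Rel,
        (∀ w : FreeLieAlgebra C X, πA (arrMk C 𝒜 Rel w) = locProj C A Rel w) ∧
          ∀ z : LocLie C A Rel, πA (sA z) = z := by
  classical
  have hf_of : ∀ x : X, locProj C A Rel (of C x) =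
      if h : x ∈ A then locMk C A Rel (of C (⟨x, h⟩ : A)) else 0 := by
    intro x
    simp [locProj]
  have key : definingIdeal C 𝒜 Rel ≤ (locProj C A Rel).ker := by
    rw [definingIdeal, LieSubmodule.lieSpan_le]
    rintro z (⟨x, y, hxy, rfl⟩ | hz)
    · simp only [SetLike.mem_coe, LieHom.mem_ker, LieHom.map_lie]
      have hnot : ¬(x ∈ A ∧ y ∈ A) := by
        rintro ⟨hx, hy⟩
        exact hxy A hA (by rintro t (rfl | rfl) <;> assumption)
      rcases not_and_or.mp hnot with hx | hy
      · rw [hf_of x, dif_neg hx, zero_lie]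
      · rw [hf_of y, dif_neg hy, lie_zero]
    · simp only [Set.mem_iUnion, Set.mem_image] at hz
      obtain ⟨A', hA', r, hr, rfl⟩ := hz
      simp only [SetLike.mem_coe, LieHom.mem_ker]
      by_cases hAA : A' = A
      · subst hAA
        have hcomp : (locProj C A' Rel).comp (inclX C A') =
            idealMkHom (locIdeal C A' Rel) := by
          apply FreeLieAlgebra.hom_ext
          intro a
          rw [LieHom.comp_apply, inclX, FreeLieAlgebra.lift_of_apply, hf_of,
            dif_pos a.2, idealMkHom_apply]
          rfl
        have : locProj C A' Rel (inclX C A' r) =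
            idealMkHom (locIdeal C A' Rel) r := by
          rw [← LieHom.comp_apply, hcomp]
        rw [this, idealMkHom_apply]
        exact LieSubmodule.Quotient.mk_eq_zero'.mpr (LieSubmodule.subset_lieSpan hr)
      · have hsub : (A' ∩ A).Subsingleton := h𝒜.2.1 A' hA' A hA hAA
        set T : Set (LocLie C A Rel) :=
          Set.range (fun a : A' => locProj C A Rel (of C (a : X))) with hT_def
        have hT : ∀ t ∈ T, ∀ s ∈ T, ⁅t, s⁆ = 0 := by
          rintro _ ⟨a, rfl⟩ _ ⟨b, rfl⟩
          show ⁅locProj C A Rel (of C (a : X)), locProj C A Rel (of C (b : X))⁆ = 0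
          rw [hf_of, hf_of]
          by_cases ha : (a : X) ∈ A
          · by_cases hb : (b : X) ∈ A
            · rw [dif_pos ha, dif_pos hb]
              have hab : (⟨(a : X), ha⟩ : A) = ⟨(b : X), hb⟩ :=
                Subtype.ext (hsub ⟨a.2, ha⟩ ⟨b.2, hb⟩)
              rw [hab, lie_self]
            · rw [dif_neg hb, lie_zero]
          · rw [dif_neg ha, zero_lie]
        have hφ : (locProj C A Rel).comp (inclX C A') =
            FreeLieAlgebra.lift C (fun a : A' => locProj C A Rel (of C (a : X))) := by
          apply FreeLieAlgebra.hom_ext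
          intro a
          rw [LieHom.comp_apply, inclX, FreeLieAlgebra.lift_of_apply,
            FreeLieAlgebra.lift_of_apply]
        have hmem : ∀ u, ((locProj C A Rel).comp (inclX C A')) u ∈
            Submodule.span C T := by
          intro u
          rw [hφ]
          exact lift_mem_aux _ (abelianSpan (C := C) T hT)
            (fun a => Submodule.subset_span ⟨a, rfl⟩) u
        have hab : ∀ u v : FreeLieAlgebra C A',
            ⁅((locProj C A Rel).comp (inclX C A')) u,
              ((locProj C A Rel).comp (inclX C A')) v⁆ = 0 := by
          intro u v
          exact span_lie_zero_aux hT _ (hmem u) _ (hmem v)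
        exact derived_ker_aux _ hab r (hRel A' hA' hr)
  refine ⟨fun z hz => LieHom.mem_ker.mp (key hz),
    idealLift (definingIdeal C 𝒜 Rel) (locProj C A Rel) key, fun w => rfl, ?_⟩
  have hcomp : ((idealLift (definingIdeal C 𝒜 Rel) (locProj C A Rel) key).comp sA).comp
      (idealMkHom (locIdeal C A Rel)) = idealMkHom (locIdeal C A Rel) := by
    apply FreeLieAlgebra.hom_ext
    intro a
    rw [LieHom.comp_apply, LieHom.comp_apply, idealMkHom_apply]
    have h1 : sA (locMk C A Rel (of C a)) = arrMk C 𝒜 Rel (of C (a : X)) := hsA a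
    show (idealLift (definingIdeal C 𝒜 Rel) (locProj C A Rel) key)
      (sA (locMk C A Rel (of C a))) = idealMkHom (locIdeal C A Rel) (of C a)
    rw [h1]
    show (idealLift (definingIdeal C 𝒜 Rel) (locProj C A Rel) key)
      (LieSubmodule.Quotient.mk (N := definingIdeal C 𝒜 Rel) (of C (a : X))) = _
    rw [idealLift_mk, hf_of, dif_pos a.2, idealMkHom_apply]
    rfl
  intro z
  obtain ⟨r, rfl⟩ := LieSubmodule.Quotient.surjective_mk' (locIdeal C A Rel) z
  have := LieHom.congr_fun hcomp r
  simpa [idealMkHom_apply] using this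
end

section
/- Let L be a Lie algebra of a set-arrangement 𝒜 on X and let A, B ∈ 𝒜 with A ≠ B. Then π_B' ∘ s_A' = 0, i.e., π_B maps the image s_A(L_A') of the derived subalgebra of L_A to zero in L_B. -/
open FreeLieAlgebra

variable (C : Type*) [CommRing C] {X : Type*}

/-- For distinct `A, B ∈ 𝒜`, `π_B' ∘ s_A' = 0`: `π_B` kills the image under `s_A` of the
derived subalgebra of `L_A`. -/
theorem statement3 {C : Type*} [CommRing C] {X : Type*} [Fintype X]
    (𝒜 : Set (Set X)) (Rel : ∀ A : Set X, Set (FreeLieAlgebra C A))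
    (h𝒜 : IsSetArrangement 𝒜) (hRel : AdmissibleRel C 𝒜 Rel)
    (A B : Set X) (hA : A ∈ 𝒜) (hB : B ∈ 𝒜) (hAB : A ≠ B)
    (sA : LocLie C A Rel →ₗ⁅C⁆ ArrLie C 𝒜 Rel)
    (hsA : ∀ a : A, sA (locMk C A Rel (of C a)) = arrMk C 𝒜 Rel (of C (a : X)))
    (πB : ArrLie C 𝒜 Rel →ₗ⁅C⁆ LocLie C B Rel)
    (hπB₁ : ∀ b : B, πB (arrMk C 𝒜 Rel (of C (b : X))) = locMk C B Rel (of C b))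
    (hπB₂ : ∀ x : X, x ∉ B → πB (arrMk C 𝒜 Rel (of C x)) = 0) :
    ∀ z ∈ (LieAlgebra.derivedSeries C (LocLie C A Rel) 1 : Set (LocLie C A Rel)),
      πB (sA z) = 0 := by
  
  classical
  set f : LocLie C A Rel →ₗ⁅C⁆ LocLie C B Rel := πB.comp sA with hf
  have hsub : (A ∩ B).Subsingleton := h𝒜.2.1 A hA B hB hAB
  -- value of f on generators
  have hgen : ∀ a : A, f (locMk C A Rel (of C a)) = πB (arrMk C 𝒜 Rel (of C (a : X))) := by
    intro a
    simp only [hf, LieHom.comp_apply, hsA a]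
  -- a single element spanning the image of the generators
  have hc : ∃ c : LocLie C B Rel,
      ∀ a : A, f (locMk C A Rel (of C a)) ∈ Submodule.span C {c} := by
    by_cases h : ∃ x, x ∈ A ∧ x ∈ B
    · obtain ⟨x0, hxA, hxB⟩ := h
      refine ⟨locMk C B Rel (of C (⟨x0, hxB⟩ : B)), fun a => ?_⟩
      by_cases ha : (a : X) ∈ B
      · have hax : (a : X) = x0 := hsub ⟨a.2, ha⟩ ⟨hxA, hxB⟩
        have hba : (⟨(a : X), ha⟩ : B) = ⟨x0, hxB⟩ := Subtype.ext hax
        have h1 : πB (arrMk C 𝒜 Rel (of C (a : X))) = locMk C B Rel (of C (⟨x0, hxB⟩ : B)) := by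
          rw [← hba]; exact hπB₁ ⟨(a : X), ha⟩
        rw [hgen a, h1]
        exact Submodule.mem_span_singleton_self _
      · rw [hgen a, hπB₂ _ ha]
        exact Submodule.zero_mem _
    · refine ⟨0, fun a => ?_⟩
      have ha : (a : X) ∉ B := fun hb => h ⟨a, a.2, hb⟩
      rw [hgen a, hπB₂ _ ha]
      exact Submodule.zero_mem _
  obtain ⟨c, hc⟩ := hc
  -- the span of c is a Lie subalgebra
  let S : LieSubalgebra C (LocLie C B Rel) :=
    { Submodule.span C {c} with
      lie_mem' := by
        intro u v hu hv
        obtain ⟨s, rfl⟩ := Submodule.mem_span_singleton.mp hu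
        obtain ⟨t, rfl⟩ := Submodule.mem_span_singleton.mp hv
        show ⁅s • c, t • c⁆ ∈ Submodule.span C {c}
        rw [smul_lie, lie_smul, lie_self, smul_zero, smul_zero]
        exact Submodule.zero_mem _ }
  -- the quotient map as a Lie hom
  let q : FreeLieAlgebra C A →ₗ⁅C⁆ LocLie C A Rel :=
    { (LieSubmodule.Quotient.mk' (locIdeal C A Rel)).toLinearMap with
      map_lie' := fun {_ _} => rfl }
  let φ : FreeLieAlgebra C A →ₗ⁅C⁆ S :=
    FreeLieAlgebra.lift C fun a : A => (⟨f (locMk C A Rel (of C a)), hc a⟩ : S)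
  have heq : (S.incl.comp φ : FreeLieAlgebra C A →ₗ⁅C⁆ LocLie C B Rel) = f.comp q := by
    apply FreeLieAlgebra.hom_ext
    intro a
    simp only [LieHom.comp_apply, φ, FreeLieAlgebra.lift_of_apply]
    rfl
  have himg : ∀ z : LocLie C A Rel, f z ∈ Submodule.span C {c} := by
    intro z
    obtain ⟨r, rfl⟩ := LieSubmodule.Quotient.surjective_mk' (locIdeal C A Rel) z
    have h1 : S.incl (φ r) = f (q r) := LieHom.congr_fun heq r
    have h2 : f (q r) ∈ Submodule.span C {c} := h1 ▸ (φ r).2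
    exact h2
  have key : ∀ z w : LocLie C A Rel, ⁅f z, f w⁆ = 0 := by
    intro z w
    obtain ⟨s, hs⟩ := Submodule.mem_span_singleton.mp (himg z)
    obtain ⟨t, ht⟩ := Submodule.mem_span_singleton.mp (himg w)
    rw [← hs, ← ht, smul_lie, lie_smul, lie_self, smul_zero, smul_zero]
  intro z hz
  have hz' : z ∈ Submodule.span C
      {m | ∃ x ∈ (⊤ : LieIdeal C (LocLie C A Rel)),
        ∃ n ∈ (⊤ : LieIdeal C (LocLie C A Rel)), ⁅x, n⁆ = m} := by
    rw [← LieSubmodule.lieIdeal_oper_eq_linear_span']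
    have : z ∈ LieAlgebra.derivedSeries C (LocLie C A Rel) 1 := hz
    rw [LieAlgebra.derivedSeries_def, LieAlgebra.derivedSeriesOfIdeal_succ,
      LieAlgebra.derivedSeriesOfIdeal_zero] at this
    exact this
  clear hz
  show f z = 0
  induction hz' using Submodule.span_induction with
  | mem m hm =>
    obtain ⟨x, -, n, -, rfl⟩ := hm
    rw [LieHom.map_lie]
    exact key x n
  | zero => exact f.map_zero
  | add u v _ _ hu hv => rw [map_add, hu, hv, add_zero]
  | smul t u _ hu => rw [map_smul, hu, smul_zero]
end

section
/- Let L be a Lie algebra of a set-arrangement 𝒜 on X. Then π' ∘ s' = id on ⊕_{A∈𝒜} L_A', π' is surjective, s' is injective, and the C-submodule im(s') = Σ_{A∈𝒜} im(s_A') of L' is an internal direct sum of the submodules im(s_A'). -/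
open FreeLieAlgebra

variable (C : Type*) [CommRing C] {X : Type*}

section Aux

variable {C : Type*} [CommRing C]

/-- The quotient map as a Lie algebra morphism. -/
noncomputable def quotLieHom {L : Type*} [LieRing L] [LieAlgebra C L] (I : LieIdeal C L) :
    L →ₗ⁅C⁆ L ⧸ I where
  toLinearMap := (LieSubmodule.Quotient.mk' I).toLinearMap
  map_lie' := by intro x y; exact LieSubmodule.Quotient.mk_bracket I x y

lemma quotLieHom_apply {L : Type*} [LieRing L] [LieAlgebra C L] (I : LieIdeal C L) (x : L) :
    quotLieHom I x = LieSubmodule.Quotient.mk (N := I) x := rfl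

lemma quotLieHom_surjective {L : Type*} [LieRing L] [LieAlgebra C L] (I : LieIdeal C L) :
    Function.Surjective (quotLieHom (C := C) I) :=
  Quot.mk_surjective

lemma mem_derived_iff {L : Type*} [LieRing L] [LieAlgebra C L] (z : L) :
    z ∈ LieAlgebra.derivedSeries C L 1 ↔
      z ∈ Submodule.span C {m : L | ∃ x y : L, ⁅x, y⁆ = m} := by
  have h1 : LieAlgebra.derivedSeries C L 1 = ⁅(⊤ : LieIdeal C L), (⊤ : LieIdeal C L)⁆ := by
    rw [LieAlgebra.derivedSeries_def, LieAlgebra.derivedSeriesOfIdeal_succ,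
      LieAlgebra.derivedSeriesOfIdeal_zero]
  rw [h1, ← LieSubmodule.mem_toSubmodule, LieSubmodule.lieIdeal_oper_eq_linear_span']
  simp only [LieSubmodule.mem_top, true_and, exists_prop]

lemma lieHom_map_derived {L L' : Type*} [LieRing L] [LieAlgebra C L] [LieRing L']
    [LieAlgebra C L'] (f : L →ₗ⁅C⁆ L') {z : L} (hz : z ∈ LieAlgebra.derivedSeries C L 1) :
    f z ∈ LieAlgebra.derivedSeries C L' 1 := by
  rw [mem_derived_iff] at hz
  rw [mem_derived_iff]
  induction hz using Submodule.span_induction with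
  | mem m hm =>
    obtain ⟨x, y, rfl⟩ := hm
    exact Submodule.subset_span ⟨f x, f y, (f.map_lie x y).symm⟩
  | zero => simp
  | add u v _ _ hu hv => rw [map_add f]; exact Submodule.add_mem _ hu hv
  | smul c u _ hu => rw [map_smul f]; exact Submodule.smul_mem _ c hu

/-- If every value of a Lie morphism lies in the span of a single element, then it kills
the derived subalgebra. -/
lemma lieHom_zero_on_derived {L L' : Type*} [LieRing L] [LieAlgebra C L] [LieRing L']
    [LieAlgebra C L'] (f : L →ₗ⁅C⁆ L') (g : L') (hf : ∀ u : L, ∃ c : C, f u = c • g)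
    {z : L} (hz : z ∈ LieAlgebra.derivedSeries C L 1) : f z = 0 := by
  rw [mem_derived_iff] at hz
  induction hz using Submodule.span_induction with
  | mem m hm =>
    obtain ⟨x, y, rfl⟩ := hm
    obtain ⟨c, hc⟩ := hf x
    obtain ⟨c', hc'⟩ := hf y
    rw [f.map_lie, hc, hc', smul_lie, lie_smul, lie_self, smul_zero, smul_zero]
  | zero => simp
  | add u v _ _ hu hv => rw [map_add f, hu, hv, add_zero]
  | smul c u _ hu => rw [map_smul f, hu, smul_zero]

end Aux

attribute [local instance] LieRing.ofAssociativeRing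

/-- `π' ∘ s' = id` on `⊕_{A∈𝒜} L_A'`, `π'` is surjective, `s'` is injective, and the
submodule `im(s') = Σ_A im(s_A')` of `L'` is an internal direct sum. -/
theorem statement4 {C : Type*} [CommRing C] {X : Type*} [Fintype X]
    (𝒜 : Set (Set X)) [Fintype ↥𝒜] (Rel : ∀ A : Set X, Set (FreeLieAlgebra C A))
    (h𝒜 : IsSetArrangement 𝒜) (hRel : AdmissibleRel C 𝒜 Rel)
    (s : ∀ A : 𝒜, LocLie C (A : Set X) Rel →ₗ⁅C⁆ ArrLie C 𝒜 Rel)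
    (hs : ∀ (A : 𝒜) (a : (A : Set X)),
      s A (locMk C (A : Set X) Rel (of C a)) = arrMk C 𝒜 Rel (of C (a : X)))
    (π : ∀ A : 𝒜, ArrLie C 𝒜 Rel →ₗ⁅C⁆ LocLie C (A : Set X) Rel)
    (hπ₁ : ∀ (A : 𝒜) (a : (A : Set X)),
      π A (arrMk C 𝒜 Rel (of C (a : X))) = locMk C (A : Set X) Rel (of C a))
    (hπ₂ : ∀ (A : 𝒜) (x : X), x ∉ (A : Set X) → π A (arrMk C 𝒜 Rel (of C x)) = 0) :
    -- `π' ∘ s' = id` on `⊕ L_A'`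
    (∀ z : ∀ A : 𝒜, LocLie C (A : Set X) Rel,
      (∀ A : 𝒜, z A ∈ LieAlgebra.derivedSeries C (LocLie C (A : Set X) Rel) 1) →
      ∀ B : 𝒜, π B (∑ A : 𝒜, s A (z A)) = z B) ∧
    -- `π'` is surjective onto `⊕ L_A'`
    (∀ w : ∀ A : 𝒜, LocLie C (A : Set X) Rel,
      (∀ A : 𝒜, w A ∈ LieAlgebra.derivedSeries C (LocLie C (A : Set X) Rel) 1) →
      ∃ u ∈ LieAlgebra.derivedSeries C (ArrLie C 𝒜 Rel) 1, ∀ A : 𝒜, π A u = w A) ∧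
    -- `s'` is injective
    (∀ z w : ∀ A : 𝒜, LocLie C (A : Set X) Rel,
      (∀ A : 𝒜, z A ∈ LieAlgebra.derivedSeries C (LocLie C (A : Set X) Rel) 1) →
      (∀ A : 𝒜, w A ∈ LieAlgebra.derivedSeries C (LocLie C (A : Set X) Rel) 1) →
      ∑ A : 𝒜, s A (z A) = ∑ A : 𝒜, s A (w A) → z = w) ∧
    -- the sum `Σ_A im(s_A')` is direct
    (∀ r : 𝒜 → ArrLie C 𝒜 Rel,
      (∀ A : 𝒜, r A ∈ s A ''
        (LieAlgebra.derivedSeries C (LocLie C (A : Set X) Rel) 1 : Set (LocLie C (A : Set X) Rel))) →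
      ∑ A : 𝒜, r A = 0 → ∀ A : 𝒜, r A = 0) := by
  classical
  -- diagonal identity: `π A ∘ s A = id`
  have hdiag : ∀ (A : 𝒜) (z : LocLie C (A : Set X) Rel), π A (s A z) = z := by
    intro A z
    obtain ⟨w, rfl⟩ := quotLieHom_surjective (C := C) (locIdeal C (A : Set X) Rel) z
    have hcomp : (π A).comp ((s A).comp (quotLieHom (locIdeal C (A : Set X) Rel))) =
        quotLieHom (locIdeal C (A : Set X) Rel) := by
      apply FreeLieAlgebra.hom_ext
      intro a
      simp only [LieHom.comp_apply, quotLieHom_apply]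
      have h1 : (LieSubmodule.Quotient.mk (N := locIdeal C (A : Set X) Rel)
          (of C a)) = locMk C (A : Set X) Rel (of C a) := rfl
      rw [h1, hs A a, hπ₁ A a]
    exact DFunLike.congr_fun hcomp w
  -- off-diagonal vanishing on the derived subalgebra
  have hoff : ∀ (A B : 𝒜), A ≠ B →
      ∀ z ∈ LieAlgebra.derivedSeries C (LocLie C (A : Set X) Rel) 1, π B (s A z) = 0 := by
    intro A B hAB z hz
    set f : LocLie C (A : Set X) Rel →ₗ⁅C⁆ LocLie C (B : Set X) Rel := (π B).comp (s A) with hf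
    have hsub : ((A : Set X) ∩ (B : Set X)).Subsingleton :=
      h𝒜.2.1 A A.2 B B.2 (fun h => hAB (Subtype.ext h))
    obtain ⟨g, hg⟩ : ∃ g, ∀ u, ∃ c : C, f u = c • g := by
      by_cases hne : ((A : Set X) ∩ (B : Set X)).Nonempty
      · obtain ⟨x, hxA, hxB⟩ := hne
        set g : LocLie C (B : Set X) Rel := locMk C (B : Set X) Rel (of C ⟨x, hxB⟩) with hgdef
        refine ⟨g, ?_⟩
        set φ : FreeLieAlgebra C (A : Set X) →ₗ⁅C⁆ C :=
          FreeLieAlgebra.lift C (fun a => if ((a : X) ∈ (B : Set X)) then (1 : C) else 0) with hφ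
        set ψ : C →ₗ⁅C⁆ LocLie C (B : Set X) Rel :=
          { toLinearMap := LinearMap.toSpanSingleton C _ g
            map_lie' := by
              intro c c'
              show (⁅c, c'⁆ : C) • g = ⁅c • g, c' • g⁆
              rw [Ring.lie_def, mul_comm, sub_self, zero_smul, smul_lie, lie_smul,
                lie_self, smul_zero, smul_zero] } with hψ
        have key : f.comp (quotLieHom (locIdeal C (A : Set X) Rel)) = ψ.comp φ := by
          apply FreeLieAlgebra.hom_ext
          intro a
          simp only [LieHom.comp_apply, quotLieHom_apply, hφ, FreeLieAlgebra.lift_of_apply]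
          have h1 : (LieSubmodule.Quotient.mk (N := locIdeal C (A : Set X) Rel)
              (of C a)) = locMk C (A : Set X) Rel (of C a) := rfl
          rw [hf]
          simp only [LieHom.comp_apply]
          rw [h1, hs A a]
          by_cases hmem : (a : X) ∈ (B : Set X)
          · rw [hπ₁ B ⟨(a : X), hmem⟩, if_pos hmem]
            have hax : (a : X) = x := hsub ⟨a.2, hmem⟩ ⟨hxA, hxB⟩
            show _ = (1 : C) • g
            rw [one_smul, hgdef]
            congr 1
            congr 1
            exact Subtype.ext hax
          · rw [hπ₂ B (a : X) hmem, if_neg hmem]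
            show (0 : LocLie C (B : Set X) Rel) = (0 : C) • g
            rw [zero_smul]
        intro u
        obtain ⟨w, rfl⟩ := quotLieHom_surjective (C := C) (locIdeal C (A : Set X) Rel) u
        exact ⟨φ w, DFunLike.congr_fun key w⟩
      · refine ⟨0, ?_⟩
        have key : f.comp (quotLieHom (locIdeal C (A : Set X) Rel)) = 0 := by
          apply FreeLieAlgebra.hom_ext
          intro a
          have hmem : (a : X) ∉ (B : Set X) := fun h => hne ⟨(a : X), a.2, h⟩
          simp only [LieHom.comp_apply, quotLieHom_apply, LieHom.zero_apply]
          have h1 : (LieSubmodule.Quotient.mk (N := locIdeal C (A : Set X) Rel)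
              (of C a)) = locMk C (A : Set X) Rel (of C a) := rfl
          rw [hf]
          simp only [LieHom.comp_apply]
          rw [h1, hs A a, hπ₂ B (a : X) hmem]
        intro u
        obtain ⟨w, rfl⟩ := quotLieHom_surjective (C := C) (locIdeal C (A : Set X) Rel) u
        refine ⟨0, ?_⟩
        rw [zero_smul]
        exact DFunLike.congr_fun key w
    exact lieHom_zero_on_derived f g hg hz
  -- part 1
  have part1 : ∀ z : ∀ A : 𝒜, LocLie C (A : Set X) Rel,
      (∀ A : 𝒜, z A ∈ LieAlgebra.derivedSeries C (LocLie C (A : Set X) Rel) 1) →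
      ∀ B : 𝒜, π B (∑ A : 𝒜, s A (z A)) = z B := by
    intro z hz B
    rw [show π B (∑ A : 𝒜, s A (z A)) = ∑ A : 𝒜, π B (s A (z A)) from
      map_sum (π B).toLinearMap _ _]
    rw [Finset.sum_eq_single B (fun A _ hAB => hoff A B hAB (z A) (hz A))
      (fun h => absurd (Finset.mem_univ B) h)]
    exact hdiag B (z B)
  refine ⟨part1, ?_, ?_, ?_⟩
  · -- surjectivity
    intro w hw
    refine ⟨∑ A : 𝒜, s A (w A), ?_, fun A => part1 w hw A⟩
    exact sum_mem fun A _ => lieHom_map_derived (s A) (hw A)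
  · -- injectivity
    intro z w hz hw heq
    funext B
    have h1 := part1 z hz B
    have h2 := part1 w hw B
    rw [heq] at h1
    rw [h2] at h1
    exact h1.symm
  · -- directness
    intro r hr hsum A
    choose z hzmem hzeq using hr
    have h1 : π A (∑ B : 𝒜, s B (z B)) = z A := part1 z hzmem A
    have h2 : (∑ B : 𝒜, s B (z B)) = 0 := by
      rw [Finset.sum_congr rfl (fun B _ => hzeq B), hsum]
    rw [h2, map_zero (π A)] at h1
    rw [← hzeq A, ← h1, map_zero (s A)]
end

section
/- Let L be a Lie algebra of a set-arrangement 𝒜 on X. The following conditions are equivalent: 1) [x, im(s_A')] = 0 for all A ∈ 𝒜 and all x ∈ X \ A; 2) im(s_A') is an ideal in L for all A ∈ 𝒜; 3) L' = Σ_{A∈𝒜} im(s_A'); 4) s' is surjective; 5) π' is injective. -/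
open FreeLieAlgebra

variable (C : Type*) [CommRing C] {X : Type*}

section AuxStatement5

variable {C : Type*} [CommRing C]

/-- The quotient map by a Lie ideal, as a Lie algebra morphism. -/
noncomputable def auxIdealMk {L : Type*} [LieRing L] [LieAlgebra C L] (I : LieIdeal C L) :
    L →ₗ⁅C⁆ L ⧸ I where
  toLinearMap := (I : Submodule C L).mkQ
  map_lie' := rfl

@[simp] theorem auxIdealMk_apply {L : Type*} [LieRing L] [LieAlgebra C L] (I : LieIdeal C L)
    (m : L) : auxIdealMk I m = LieSubmodule.Quotient.mk (N := I) m := rfl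

theorem aux_self_mem_lieSpan {X : Type*} (m : FreeLieAlgebra C X) :
    m ∈ LieSubalgebra.lieSpan C (FreeLieAlgebra C X) (Set.range (of C)) := by
  set S := LieSubalgebra.lieSpan C (FreeLieAlgebra C X) (Set.range (of C))
  let F : FreeLieAlgebra C X →ₗ⁅C⁆ S :=
    lift C fun x => ⟨of C x, LieSubalgebra.subset_lieSpan ⟨x, rfl⟩⟩
  have h : S.incl.comp F = LieHom.id := by
    apply FreeLieAlgebra.hom_ext
    intro x
    simp only [LieHom.comp_apply, LieHom.id_apply, F, lift_of_apply]
    rfl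
  have : S.incl (F m) = m := by rw [← LieHom.comp_apply, h]; rfl
  rw [← this]; exact (F m).2

theorem aux_freeLie_induction {X : Type*} {P : FreeLieAlgebra C X → Prop}
    (h_of : ∀ x, P (of C x)) (h_zero : P 0)
    (h_smul : ∀ (c : C) (u), P u → P (c • u))
    (h_add : ∀ u v, P u → P v → P (u + v))
    (h_lie : ∀ u v, P u → P v → P ⁅u, v⁆) (m : FreeLieAlgebra C X) : P m := by
  refine LieSubalgebra.lieSpan_induction (R := C) (p := fun u _ => P u) ?_ h_zero
    (fun u v _ _ => h_add u v) (fun c u _ h => h_smul c u h) (fun u v _ _ => h_lie u v)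
    (aux_self_mem_lieSpan m)
  rintro _ ⟨x, rfl⟩; exact h_of x

theorem aux_derived_one_eq_span {L : Type*} [LieRing L] [LieAlgebra C L] :
    (LieSubmodule.toSubmodule (LieAlgebra.derivedSeries C L 1)) =
      Submodule.span C {m : L | ∃ x y : L, ⁅x, y⁆ = m} := by
  rw [LieAlgebra.derivedSeries_def, show (1 : ℕ) = 0 + 1 from rfl,
      LieAlgebra.derivedSeriesOfIdeal_succ, LieAlgebra.derivedSeriesOfIdeal_zero,
      LieSubmodule.lieIdeal_oper_eq_linear_span']
  congr 1
  ext m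
  simp

theorem aux_lie_mem_derived_one {L : Type*} [LieRing L] [LieAlgebra C L] (x y : L) :
    ⁅x, y⁆ ∈ LieAlgebra.derivedSeries C L 1 := by
  rw [LieAlgebra.derivedSeries_def, show (1 : ℕ) = 0 + 1 from rfl,
      LieAlgebra.derivedSeriesOfIdeal_succ, LieAlgebra.derivedSeriesOfIdeal_zero]
  exact LieSubmodule.lie_mem_lie (LieSubmodule.mem_top x) (LieSubmodule.mem_top y)

theorem aux_mem_derived_one_iff {L : Type*} [LieRing L] [LieAlgebra C L] {u : L} :
    u ∈ LieAlgebra.derivedSeries C L 1 ↔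
      u ∈ Submodule.span C {m : L | ∃ x y : L, ⁅x, y⁆ = m} := by
  rw [← aux_derived_one_eq_span]; rfl

theorem aux_map_derived_one {L L' : Type*} [LieRing L] [LieAlgebra C L] [LieRing L']
    [LieAlgebra C L'] (f : L →ₗ⁅C⁆ L') {u : L} (hu : u ∈ LieAlgebra.derivedSeries C L 1) :
    f u ∈ LieAlgebra.derivedSeries C L' 1 := by
  rw [aux_mem_derived_one_iff] at hu
  induction hu using Submodule.span_induction with
  | mem m hm => obtain ⟨x, y, rfl⟩ := hm; rw [f.map_lie]; exact aux_lie_mem_derived_one _ _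
  | zero => rw [map_zero f]; exact (LieAlgebra.derivedSeries C L' 1).zero_mem
  | add a b _ _ ha hb => rw [map_add f]; exact (LieAlgebra.derivedSeries C L' 1).add_mem ha hb
  | smul c a _ ha => rw [map_smul f]; exact (LieAlgebra.derivedSeries C L' 1).smul_mem c ha

theorem aux_span_bracket_zero {L : Type*} [LieRing L] [LieAlgebra C L] {S : Set L}
    (h : ∀ p ∈ S, ∀ q ∈ S, ⁅p, q⁆ = 0) {u v : L}
    (hu : u ∈ Submodule.span C S) (hv : v ∈ Submodule.span C S) : ⁅u, v⁆ = 0 := by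
  have h1 : ∀ p ∈ S, ⁅p, v⁆ = 0 := by
    intro p hp
    induction hv using Submodule.span_induction with
    | mem q hq => exact h p hp q hq
    | zero => simp
    | add a b _ _ ha hb => rw [lie_add, ha, hb, add_zero]
    | smul c a _ ha => rw [lie_smul, ha, smul_zero]
  induction hu using Submodule.span_induction with
  | mem p hp => exact h1 p hp
  | zero => simp
  | add a b _ _ ha hb => rw [add_lie, ha, hb, add_zero]
  | smul c a _ ha => rw [smul_lie, ha, smul_zero]

end AuxStatement5
/-- The five conditions of Theorem 2.7 (`\ref{eq}`) are equivalent: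
1) `[x, im(s_A')] = 0` for all `A ∈ 𝒜` and `x ∈ X \ A`;
2) `im(s_A')` is an ideal in `L` for all `A ∈ 𝒜`;
3) `L' = Σ_A im(s_A')`;
4) `s'` is surjective;
5) `π'` is injective. -/
theorem statement5 {C : Type*} [CommRing C] {X : Type*} [Fintype X]
    (𝒜 : Set (Set X)) [Fintype ↥𝒜] (Rel : ∀ A : Set X, Set (FreeLieAlgebra C A))
    (h𝒜 : IsSetArrangement 𝒜) (hRel : AdmissibleRel C 𝒜 Rel)
    (s : ∀ A : 𝒜, LocLie C (A : Set X) Rel →ₗ⁅C⁆ ArrLie C 𝒜 Rel)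
    (hs : ∀ (A : 𝒜) (a : (A : Set X)),
      s A (locMk C (A : Set X) Rel (of C a)) = arrMk C 𝒜 Rel (of C (a : X)))
    (π : ∀ A : 𝒜, ArrLie C 𝒜 Rel →ₗ⁅C⁆ LocLie C (A : Set X) Rel)
    (hπ₁ : ∀ (A : 𝒜) (a : (A : Set X)),
      π A (arrMk C 𝒜 Rel (of C (a : X))) = locMk C (A : Set X) Rel (of C a))
    (hπ₂ : ∀ (A : 𝒜) (x : X), x ∉ (A : Set X) → π A (arrMk C 𝒜 Rel (of C x)) = 0) :
    List.TFAE [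
      -- 1) `[x, im(s_A')] = 0` for `x ∉ A`
      ∀ (A : 𝒜) (x : X), x ∉ (A : Set X) →
        ∀ r ∈ s A ''
          (LieAlgebra.derivedSeries C (LocLie C (A : Set X) Rel) 1 : Set (LocLie C (A : Set X) Rel)),
          ⁅arrMk C 𝒜 Rel (of C x), r⁆ = 0,
      -- 2) `im(s_A')` is an ideal in `L`
      ∀ (A : 𝒜) (u : ArrLie C 𝒜 Rel),
        ∀ r ∈ s A ''
          (LieAlgebra.derivedSeries C (LocLie C (A : Set X) Rel) 1 : Set (LocLie C (A : Set X) Rel)),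
          ⁅u, r⁆ ∈ s A ''
            (LieAlgebra.derivedSeries C (LocLie C (A : Set X) Rel) 1 : Set (LocLie C (A : Set X) Rel)),
      -- 3) `L' = Σ_A im(s_A')`
      LieSubmodule.toSubmodule (LieAlgebra.derivedSeries C (ArrLie C 𝒜 Rel) 1) =
        ⨆ A : 𝒜, Submodule.map (s A).toLinearMap
          (LieSubmodule.toSubmodule (LieAlgebra.derivedSeries C (LocLie C (A : Set X) Rel) 1)),
      -- 4) `s'` is surjective
      ∀ u ∈ LieAlgebra.derivedSeries C (ArrLie C 𝒜 Rel) 1,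
        ∃ z : ∀ A : 𝒜, LocLie C (A : Set X) Rel,
          (∀ A : 𝒜, z A ∈ LieAlgebra.derivedSeries C (LocLie C (A : Set X) Rel) 1) ∧
          u = ∑ A : 𝒜, s A (z A),
      -- 5) `π'` is injective
      ∀ u ∈ LieAlgebra.derivedSeries C (ArrLie C 𝒜 Rel) 1,
        ∀ v ∈ LieAlgebra.derivedSeries C (ArrLie C 𝒜 Rel) 1,
          (∀ A : 𝒜, π A u = π A v) → u = v] := by
  classical
  -- surjectivity of the quotient maps
  have hsurjA : ∀ A : Set X, Function.Surjective (locMk C A Rel) := fun A u =>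
    Quotient.inductionOn' u fun w => ⟨w, rfl⟩
  have hsurjL : Function.Surjective (arrMk C 𝒜 Rel) := fun u =>
    Quotient.inductionOn' u fun w => ⟨w, rfl⟩
  -- π_A ∘ s_A = id
  have hπs : ∀ (A : 𝒜) (u : LocLie C (A : Set X) Rel), π A (s A u) = u := by
    intro A u
    have h : ((π A).comp (s A)).comp (auxIdealMk (locIdeal C (A : Set X) Rel)) =
        (LieHom.id).comp (auxIdealMk (locIdeal C (A : Set X) Rel)) := by
      apply FreeLieAlgebra.hom_ext
      intro a
      show π A (s A (locMk C (A : Set X) Rel (of C a))) = locMk C (A : Set X) Rel (of C a)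
      rw [hs, hπ₁]
    obtain ⟨m, rfl⟩ := hsurjA (A : Set X) u
    exact DFunLike.congr_fun h m
  -- the subsingleton intersection property
  have hAB : ∀ A B : 𝒜, A ≠ B → ((A : Set X) ∩ (B : Set X)).Subsingleton := by
    intro A B hne
    exact h𝒜.2.1 _ A.2 _ B.2 fun h => hne (Subtype.ext h)
  -- key lemma: π_B ∘ s_A kills derived elements when A ≠ B
  have hπs0 : ∀ (A B : 𝒜), A ≠ B →
      ∀ u ∈ LieAlgebra.derivedSeries C (LocLie C (A : Set X) Rel) 1, π B (s A u) = 0 := by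
    intro A B hne u hu
    set φ : LocLie C (A : Set X) Rel →ₗ⁅C⁆ LocLie C (B : Set X) Rel := (π B).comp (s A) with hφ
    set g : ↥(A : Set X) → LocLie C (B : Set X) Rel :=
      fun a => φ (locMk C (A : Set X) Rel (of C a)) with hg
    have hgx : ∀ a : (A : Set X), g a = π B (arrMk C 𝒜 Rel (of C (a : X))) := by
      intro a
      show π B (s A (locMk C (A : Set X) Rel (of C a))) = _
      rw [hs]
    have hbrk : ∀ a b : (A : Set X), ⁅g a, g b⁆ = 0 := by
      intro a b
      by_cases ha : (a : X) ∈ (B : Set X)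
      · by_cases hb : (b : X) ∈ (B : Set X)
        · have hab : (a : X) = (b : X) := hAB A B hne ⟨a.2, ha⟩ ⟨b.2, hb⟩
          rw [hgx, hgx, hab, lie_self]
        · rw [hgx b, hπ₂ B _ hb, lie_zero]
      · rw [hgx a, hπ₂ B _ ha, zero_lie]
    set V := Submodule.span C (Set.range g) with hV
    have hVlie : ∀ p ∈ V, ∀ q ∈ V, ⁅p, q⁆ = 0 := by
      intro p hp q hq
      refine aux_span_bracket_zero ?_ hp hq
      rintro _ ⟨a, rfl⟩ _ ⟨b, rfl⟩
      exact hbrk a b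
    have himg : ∀ m, φ m ∈ V := by
      intro m
      obtain ⟨w, rfl⟩ := hsurjA (A : Set X) m
      set ψ : FreeLieAlgebra C (A : Set X) →ₗ⁅C⁆ LocLie C (B : Set X) Rel :=
        φ.comp (auxIdealMk (locIdeal C (A : Set X) Rel)) with hψ
      show ψ w ∈ V
      refine aux_freeLie_induction (P := fun w => ψ w ∈ V) (fun a => ?_) ?_ ?_ ?_ ?_ w
      · exact Submodule.subset_span ⟨a, rfl⟩
      · show ψ 0 ∈ V
        rw [map_zero ψ]; exact V.zero_mem
      · intro c u hu
        show ψ (c • u) ∈ V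
        rw [map_smul ψ]; exact V.smul_mem c hu
      · intro u v hu hv
        show ψ (u + v) ∈ V
        rw [map_add ψ]; exact V.add_mem hu hv
      · intro u v hu hv
        show ψ ⁅u, v⁆ ∈ V
        rw [ψ.map_lie, hVlie _ hu _ hv]; exact V.zero_mem
    rw [aux_mem_derived_one_iff] at hu
    show φ u = 0
    induction hu using Submodule.span_induction with
    | mem m hm =>
      obtain ⟨x, y, rfl⟩ := hm
      rw [φ.map_lie]
      exact hVlie _ (himg x) _ (himg y)
    | zero => exact φ.map_zero
    | add a b _ _ ha hb => rw [map_add φ, ha, hb, add_zero]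
    | smul c a _ ha => rw [map_smul φ, ha, smul_zero]
  -- the submodules im(s_A')
  set N : 𝒜 → Submodule C (ArrLie C 𝒜 Rel) := fun A => Submodule.map (s A).toLinearMap
    (LieSubmodule.toSubmodule (LieAlgebra.derivedSeries C (LocLie C (A : Set X) Rel) 1)) with hNdef
  tfae_have 1 → 2 := by
    intro h1 A u r hr
    obtain ⟨m, hm, rfl⟩ := hr
    have hm' : m ∈ LieAlgebra.derivedSeries C (LocLie C (A : Set X) Rel) 1 := hm
    clear hm
    obtain ⟨w, rfl⟩ := hsurjL u
    have main : ∀ w : FreeLieAlgebra C X,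
        ∀ m ∈ LieAlgebra.derivedSeries C (LocLie C (A : Set X) Rel) 1,
        ∃ m' ∈ LieAlgebra.derivedSeries C (LocLie C (A : Set X) Rel) 1,
          ⁅arrMk C 𝒜 Rel w, s A m⁆ = s A m' := by
      intro w
      refine aux_freeLie_induction
        (P := fun w => ∀ m ∈ LieAlgebra.derivedSeries C (LocLie C (A : Set X) Rel) 1,
          ∃ m' ∈ LieAlgebra.derivedSeries C (LocLie C (A : Set X) Rel) 1,
            ⁅arrMk C 𝒜 Rel w, s A m⁆ = s A m') ?_ ?_ ?_ ?_ ?_ w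
      · intro x m hm
        by_cases hx : x ∈ (A : Set X)
        · refine ⟨⁅locMk C (A : Set X) Rel (of C ⟨x, hx⟩), m⁆,
            (LieAlgebra.derivedSeries C (LocLie C (A : Set X) Rel) 1).lie_mem hm, ?_⟩
          rw [(s A).map_lie, hs]
        · refine ⟨0, zero_mem _, ?_⟩
          rw [map_zero (s A)]
          exact h1 A x hx (s A m) ⟨m, hm, rfl⟩
      · intro m hm
        refine ⟨0, zero_mem _, ?_⟩
        show ⁅auxIdealMk (definingIdeal C 𝒜 Rel) 0, s A m⁆ = s A 0
        rw [map_zero (auxIdealMk (definingIdeal C 𝒜 Rel)), zero_lie, map_zero (s A)]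
      · intro c w ih m hm
        obtain ⟨m', hm', h'⟩ := ih m hm
        refine ⟨c • m', Submodule.smul_mem _ c hm', ?_⟩
        show ⁅auxIdealMk (definingIdeal C 𝒜 Rel) (c • w), s A m⁆ = s A (c • m')
        rw [map_smul (auxIdealMk (definingIdeal C 𝒜 Rel)), smul_lie, map_smul (s A), ← h']
        rfl
      · intro w₁ w₂ ih₁ ih₂ m hm
        obtain ⟨m₁, hm₁, h₁⟩ := ih₁ m hm
        obtain ⟨m₂, hm₂, h₂⟩ := ih₂ m hm
        refine ⟨m₁ + m₂, add_mem hm₁ hm₂, ?_⟩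
        show ⁅auxIdealMk (definingIdeal C 𝒜 Rel) (w₁ + w₂), s A m⁆ = s A (m₁ + m₂)
        rw [map_add (auxIdealMk (definingIdeal C 𝒜 Rel)), add_lie, map_add (s A), ← h₁, ← h₂]
        rfl
      · intro w₁ w₂ ih₁ ih₂ m hm
        obtain ⟨m₁, hm₁, h₁⟩ := ih₁ m hm
        obtain ⟨m₂, hm₂, h₂⟩ := ih₂ m hm
        obtain ⟨m₁₂, hm₁₂, h₁₂⟩ := ih₁ m₂ hm₂
        obtain ⟨m₂₁, hm₂₁, h₂₁⟩ := ih₂ m₁ hm₁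
        refine ⟨m₁₂ - m₂₁, sub_mem hm₁₂ hm₂₁, ?_⟩
        show ⁅auxIdealMk (definingIdeal C 𝒜 Rel) ⁅w₁, w₂⁆, s A m⁆ = s A (m₁₂ - m₂₁)
        rw [(auxIdealMk (definingIdeal C 𝒜 Rel)).map_lie, lie_lie]
        show ⁅arrMk C 𝒜 Rel w₁, ⁅arrMk C 𝒜 Rel w₂, s A m⁆⁆ -
          ⁅arrMk C 𝒜 Rel w₂, ⁅arrMk C 𝒜 Rel w₁, s A m⁆⁆ = s A (m₁₂ - m₂₁)
        rw [h₂, h₁, h₁₂, h₂₁, ← map_sub (s A)]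
    obtain ⟨m', hm'', heq⟩ := main w m hm'
    exact ⟨m', hm'', heq.symm⟩
  tfae_have 2 → 3 := by
    intro h2
    -- M := ⨆ N A is stable under brackets with anything
    have hMlie : ∀ (u : ArrLie C 𝒜 Rel), ∀ m ∈ ⨆ A, N A, ⁅u, m⁆ ∈ ⨆ A, N A := by
      intro u m hm
      refine Submodule.iSup_induction (motive := fun m => ⁅u, m⁆ ∈ ⨆ A, N A) N hm ?_ ?_ ?_
      · intro A m hmA
        obtain ⟨m', hm', rfl⟩ := hmA
        obtain ⟨m'', hm'', heq⟩ := h2 A u (s A m') ⟨m', hm', rfl⟩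
        exact le_iSup N A ⟨m'', hm'', heq⟩
      · show ⁅u, (0 : ArrLie C 𝒜 Rel)⁆ ∈ ⨆ A, N A
        rw [lie_zero]; exact zero_mem _
      · intro a b ha hb
        show ⁅u, a + b⁆ ∈ ⨆ A, N A
        rw [lie_add]; exact add_mem ha hb
    -- brackets of generators lie in M
    have hgen : ∀ (u : ArrLie C 𝒜 Rel) (x : X), ⁅u, arrMk C 𝒜 Rel (of C x)⁆ ∈ ⨆ A, N A := by
      intro u x
      obtain ⟨w, rfl⟩ := hsurjL u
      refine aux_freeLie_induction
        (P := fun w => ⁅arrMk C 𝒜 Rel w, arrMk C 𝒜 Rel (of C x)⁆ ∈ ⨆ A, N A) ?_ ?_ ?_ ?_ ?_ w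
      · intro y
        by_cases hxy : ∃ A ∈ 𝒜, ({y, x} : Set X) ⊆ A
        · obtain ⟨A0, hA0, hsub⟩ := hxy
          set A : 𝒜 := ⟨A0, hA0⟩ with hA
          have hy : y ∈ (A : Set X) := hsub (by simp)
          have hx : x ∈ (A : Set X) := hsub (by simp)
          have heq : s A ⁅locMk C (A : Set X) Rel (of C ⟨y, hy⟩),
              locMk C (A : Set X) Rel (of C ⟨x, hx⟩)⁆ =
              ⁅arrMk C 𝒜 Rel (of C y), arrMk C 𝒜 Rel (of C x)⁆ := by
            rw [(s A).map_lie, hs A ⟨y, hy⟩, hs A ⟨x, hx⟩]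
          exact le_iSup N A ⟨_, aux_lie_mem_derived_one _ _, heq⟩
        · push_neg at hxy
          have hmem : (⁅of C y, of C x⁆ : FreeLieAlgebra C X) ∈ definingIdeal C 𝒜 Rel :=
            LieSubmodule.subset_lieSpan (Or.inl ⟨y, x, hxy, rfl⟩)
          have hz : ⁅arrMk C 𝒜 Rel (of C y), arrMk C 𝒜 Rel (of C x)⁆ = 0 := by
            show auxIdealMk (definingIdeal C 𝒜 Rel) ⁅of C y, of C x⁆ = 0
            exact (Submodule.Quotient.mk_eq_zero _).mpr hmem
          rw [hz]; exact zero_mem _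
      · show ⁅auxIdealMk (definingIdeal C 𝒜 Rel) 0, arrMk C 𝒜 Rel (of C x)⁆ ∈ _
        rw [map_zero (auxIdealMk (definingIdeal C 𝒜 Rel)), zero_lie]
        exact zero_mem _
      · intro c w ih
        show ⁅auxIdealMk (definingIdeal C 𝒜 Rel) (c • w), arrMk C 𝒜 Rel (of C x)⁆ ∈ _
        rw [map_smul (auxIdealMk (definingIdeal C 𝒜 Rel)), smul_lie]
        exact Submodule.smul_mem _ c ih
      · intro w₁ w₂ ih₁ ih₂
        show ⁅auxIdealMk (definingIdeal C 𝒜 Rel) (w₁ + w₂), arrMk C 𝒜 Rel (of C x)⁆ ∈ _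
        rw [map_add (auxIdealMk (definingIdeal C 𝒜 Rel)), add_lie]
        exact add_mem ih₁ ih₂
      · intro w₁ w₂ ih₁ ih₂
        show ⁅auxIdealMk (definingIdeal C 𝒜 Rel) ⁅w₁, w₂⁆, arrMk C 𝒜 Rel (of C x)⁆ ∈ _
        rw [(auxIdealMk (definingIdeal C 𝒜 Rel)).map_lie, lie_lie]
        exact sub_mem (hMlie _ _ ih₂) (hMlie _ _ ih₁)
    have hbrk : ∀ u v : ArrLie C 𝒜 Rel, ⁅u, v⁆ ∈ ⨆ A, N A := by
      intro u v
      obtain ⟨w, rfl⟩ := hsurjL v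
      refine aux_freeLie_induction
        (P := fun w => ∀ u : ArrLie C 𝒜 Rel, ⁅u, arrMk C 𝒜 Rel w⁆ ∈ ⨆ A, N A)
        ?_ ?_ ?_ ?_ ?_ w u
      · intro x u; exact hgen u x
      · intro u
        show ⁅u, auxIdealMk (definingIdeal C 𝒜 Rel) 0⁆ ∈ _
        rw [map_zero (auxIdealMk (definingIdeal C 𝒜 Rel)), lie_zero]
        exact zero_mem _
      · intro c w ih u
        show ⁅u, auxIdealMk (definingIdeal C 𝒜 Rel) (c • w)⁆ ∈ _
        rw [map_smul (auxIdealMk (definingIdeal C 𝒜 Rel)), lie_smul]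
        exact Submodule.smul_mem _ c (ih u)
      · intro w₁ w₂ ih₁ ih₂ u
        show ⁅u, auxIdealMk (definingIdeal C 𝒜 Rel) (w₁ + w₂)⁆ ∈ _
        rw [map_add (auxIdealMk (definingIdeal C 𝒜 Rel)), lie_add]
        exact add_mem (ih₁ u) (ih₂ u)
      · intro w₁ w₂ ih₁ ih₂ u
        show ⁅u, auxIdealMk (definingIdeal C 𝒜 Rel) ⁅w₁, w₂⁆⁆ ∈ _
        rw [(auxIdealMk (definingIdeal C 𝒜 Rel)).map_lie, leibniz_lie]
        refine add_mem (ih₂ ⁅u, arrMk C 𝒜 Rel w₁⁆) (hMlie _ _ (ih₂ u))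
    apply le_antisymm
    · rw [aux_derived_one_eq_span, Submodule.span_le]
      rintro _ ⟨x, y, rfl⟩
      exact hbrk x y
    · refine iSup_le fun A => Submodule.map_le_iff_le_comap.mpr fun m hm => ?_
      exact aux_map_derived_one (s A) hm
  tfae_have 3 → 4 := by
    intro h3 u hu
    have hmem : u ∈ ⨆ A, N A := by
      rw [← hNdef, ← h3]; exact hu
    rw [Submodule.mem_iSup_iff_exists_finsupp] at hmem
    obtain ⟨f, hf, hsum⟩ := hmem
    choose z hz hz' using fun A => Submodule.mem_map.mp (hf A)
    refine ⟨z, fun A => hz A, ?_⟩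
    rw [← hsum, Finsupp.sum_fintype _ _ fun _ => rfl]
    exact Finset.sum_congr rfl fun A _ => (hz' A).symm
  tfae_have 4 → 5 := by
    intro h4 u hu v hv hpi
    obtain ⟨z, hz, hsum⟩ := h4 (u - v) (sub_mem hu hv)
    have hz0 : ∀ B : 𝒜, z B = 0 := by
      intro B
      have h0 : π B (u - v) = 0 := by rw [map_sub (π B), hpi B, sub_self]
      have hmap_sum : π B (∑ A : 𝒜, s A (z A)) = ∑ A : 𝒜, π B (s A (z A)) :=
        map_sum (π B).toLinearMap _ Finset.univ
      rw [hsum, hmap_sum] at h0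
      rw [Finset.sum_eq_single B (fun A _ hABne => hπs0 A B hABne (z A) (hz A))
        (fun h => absurd (Finset.mem_univ B) h)] at h0
      rw [hπs B] at h0
      exact h0
    have hzero : u - v = 0 := by
      rw [hsum]
      simp only [hz0, map_zero, Finset.sum_const_zero]
    exact sub_eq_zero.mp hzero
  tfae_have 5 → 1 := by
    intro h5 A x hx r hr
    obtain ⟨m, hm, rfl⟩ := hr
    have hm' : m ∈ LieAlgebra.derivedSeries C (LocLie C (A : Set X) Rel) 1 := hm
    refine h5 _ (aux_lie_mem_derived_one _ _) 0 (zero_mem _) ?_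
    intro B
    rw [map_zero (π B), (π B).map_lie]
    by_cases hABeq : B = A
    · subst hABeq
      rw [hπ₂ B x hx, zero_lie]
    · rw [hπs0 A B (fun h => hABeq h.symm) m hm', lie_zero]
  tfae_finish
end

section
/- The holonomy Lie algebra of a set-arrangement 𝒜 satisfies the replacement condition: for every A = {y_1,…,y_k} ∈ 𝒜 and every x = y_j ∈ A, the derived subalgebra L_A' of the localized Lie algebra L_A is contained in the Lie subalgebra of L_A generated by A \ {x}. (Indeed, for all i ≠ j the relation [y_j, y_i] = Σ_{r≠j} [y_i, y_r] holds in L_A.) -/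
open FreeLieAlgebra

variable (C : Type*) [CommRing C] {X : Type*}

open Classical in
/-- The holonomy relations of a set `A`: `⁅y_i, y_1 + ⋯ + y_k⁆` for each `y_i ∈ A`. -/
noncomputable def holRel (C : Type*) [CommRing C] {X : Type*} [Fintype X] (A : Set X) :
    Set (FreeLieAlgebra C A) :=
  {z | ∃ a : A, z = ⁅of C a, ∑ b : A, of C b⁆}


section Aux

theorem myLieSpanRangeOf (R : Type*) [CommRing R] (Y : Type*) :
    LieSubalgebra.lieSpan R (FreeLieAlgebra R Y) (Set.range (FreeLieAlgebra.of R)) = ⊤ := by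
  refine top_unique ?_
  set S := LieSubalgebra.lieSpan R (FreeLieAlgebra R Y) (Set.range (FreeLieAlgebra.of R)) with hS
  have h : ∀ y : Y, FreeLieAlgebra.of R y ∈ S := fun y =>
    LieSubalgebra.subset_lieSpan ⟨y, rfl⟩
  let g : FreeLieAlgebra R Y →ₗ⁅R⁆ FreeLieAlgebra R Y :=
    S.incl.comp (FreeLieAlgebra.lift R fun y => (⟨FreeLieAlgebra.of R y, h y⟩ : S))
  have hg : g = LieHom.id := FreeLieAlgebra.hom_ext fun y => by
    simp [g, FreeLieAlgebra.lift_of_apply]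
  intro u _
  have hgu : g u ∈ S := by
    simp only [g, LieHom.comp_apply]
    exact ((FreeLieAlgebra.lift R fun y => (⟨FreeLieAlgebra.of R y, h y⟩ : S)) u).2
  rwa [hg] at hgu

variable (C : Type*) [CommRing C] {X : Type*}

/-- The quotient map `F(A) → L_A` as a morphism of Lie algebras. -/
noncomputable def locHom (A : Set X) (Rel : ∀ A : Set X, Set (FreeLieAlgebra C A)) :
    FreeLieAlgebra C A →ₗ⁅C⁆ LocLie C A Rel :=
  { (LieSubmodule.Quotient.mk' (locIdeal C A Rel)).toLinearMap with
    map_lie' := fun {_ _} => rfl }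

end Aux

open Classical in
/-- The holonomy Lie algebra satisfies the replacement condition: for every `A ∈ 𝒜` and every
`x ∈ A`, the derived subalgebra `L_A'` is contained in the Lie subalgebra of `L_A` generated by
`A \ {x}`; indeed, for all `i ≠ j` the relation `⁅y_j, y_i⁆ = Σ_{r ≠ j} ⁅y_i, y_r⁆` holds
in `L_A`. -/
theorem statement7 {C : Type*} [CommRing C] {X : Type*} [Fintype X]
    (𝒜 : Set (Set X)) (h𝒜 : IsSetArrangement 𝒜)
    (A : Set X) (hA : A ∈ 𝒜) :
    (∀ x i : A, x ≠ i →
      locMk C A (holRel C) ⁅of C x, of C i⁆ =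
        ∑ r : A, if r ≠ x then locMk C A (holRel C) ⁅of C i, of C r⁆ else 0) ∧
    ∀ x : A,
      (LieAlgebra.derivedSeries C (LocLie C A (holRel C)) 1 : Set (LocLie C A (holRel C))) ⊆
        (LieSubalgebra.lieSpan C (LocLie C A (holRel C))
          {z | ∃ a : A, a ≠ x ∧ z = locMk C A (holRel C) (of C a)} :
            Set (LocLie C A (holRel C))) := by
  classical
  set π := locMk C A (holRel C) with hπdef
  set πh := locHom C A (holRel C) with hπhdef
  set Q := (locIdeal C A (holRel C)).toSubmodule.mkQ with hQdef
  have hrel : ∀ a : A, π ⁅of C a, ∑ b : A, of C b⁆ = 0 := fun a =>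
    (LieSubmodule.Quotient.mk_eq_zero' (N := locIdeal C A (holRel C))).mpr
      (LieSubmodule.subset_lieSpan ⟨a, rfl⟩)
  have key : ∀ x i : A,
      π ⁅of C x, of C i⁆ =
        ∑ r : A, if r ≠ x then π ⁅of C i, of C r⁆ else 0 := by
    intro x i
    have hlie : ⁅of C i, ∑ b : A, of C b⁆ = ∑ b : A, ⁅of C i, of C b⁆ := by
      have h := map_sum (LieAlgebra.ad C (FreeLieAlgebra C A) (of C i))
        (fun b : A => of C b) Finset.univ
      simp only [LieAlgebra.ad_apply] at h
      exact h
    have hsum : ∑ r : A, π ⁅of C i, of C r⁆ = 0 := by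
      have h0 := hrel i
      rw [hlie] at h0
      calc ∑ r : A, π ⁅of C i, of C r⁆
          = Q (∑ r : A, ⁅of C i, of C r⁆) := (map_sum Q _ _).symm
        _ = 0 := h0
    have hsplit : ∑ r : A, (if r ≠ x then π ⁅of C i, of C r⁆ else 0) =
        (∑ r : A, π ⁅of C i, of C r⁆) - π ⁅of C i, of C x⁆ := by
      rw [← Finset.sum_erase_eq_sub (Finset.mem_univ x)]
      have h2 : ∑ r ∈ Finset.univ.erase x,
            (if r ≠ x then π ⁅of C i, of C r⁆ else 0) =
          ∑ r : A, (if r ≠ x then π ⁅of C i, of C r⁆ else 0) :=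
        Finset.sum_erase Finset.univ (by simp)
      rw [← h2]
      refine Finset.sum_congr rfl fun r hr => ?_
      rw [if_pos (Finset.mem_erase.mp hr).1]
    rw [hsplit, hsum, zero_sub,
      show -π ⁅of C i, of C x⁆ = π (-⁅of C i, of C x⁆) from (map_neg Q _).symm,
      lie_skew]
  refine ⟨fun x i _ => key x i, ?_⟩
  intro x u hu
  set S := LieSubalgebra.lieSpan C (LocLie C A (holRel C))
    {z | ∃ a : A, a ≠ x ∧ z = locMk C A (holRel C) (of C a)} with hSdef
  have hgen : ∀ a : A, a ≠ x → π (of C a) ∈ S := fun a ha =>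
    LieSubalgebra.subset_lieSpan ⟨a, ha, rfl⟩
  have hbr : ∀ i : A, π ⁅of C x, of C i⁆ ∈ S := by
    intro i
    by_cases hix : i = x
    · subst hix
      rw [lie_self, show π (0 : FreeLieAlgebra C A) = 0 from map_zero Q]
      exact S.zero_mem
    · rw [key x i]
      refine Submodule.sum_mem S.toSubmodule fun r _ => ?_
      by_cases hrx : r = x
      · rw [if_neg (by simp [hrx])]; exact S.zero_mem
      · rw [if_pos hrx]
        show ⁅π (of C i), π (of C r)⁆ ∈ S
        exact S.lie_mem (hgen i hix) (hgen r hrx)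
  have hK : ∀ s ∈ S, ⁅π (of C x), s⁆ ∈ S := by
    let T : LieSubalgebra C (LocLie C A (holRel C)) :=
      { carrier := {s | s ∈ S ∧ ⁅π (of C x), s⁆ ∈ S}
        add_mem' := fun {a b} ha hb =>
          ⟨S.add_mem ha.1 hb.1, by rw [lie_add]; exact S.add_mem ha.2 hb.2⟩
        zero_mem' := ⟨S.zero_mem, by rw [lie_zero]; exact S.zero_mem⟩
        smul_mem' := fun c a ha =>
          ⟨S.smul_mem c ha.1, by rw [lie_smul]; exact S.smul_mem c ha.2⟩
        lie_mem' := fun {a b} ha hb =>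
          ⟨S.lie_mem ha.1 hb.1, by
            rw [leibniz_lie]
            exact S.add_mem (S.lie_mem ha.2 hb.1) (S.lie_mem ha.1 hb.2)⟩ }
    have hle : S ≤ T := by
      rw [hSdef, LieSubalgebra.lieSpan_le]
      rintro z ⟨a, ha, rfl⟩
      exact ⟨hgen a ha, hbr a⟩
    exact fun s hs => (hle hs).2
  set M : Submodule C (LocLie C A (holRel C)) :=
    Submodule.span C {π (of C x)} ⊔ S.toSubmodule with hMdef
  have hxv : ∀ v ∈ M, ⁅π (of C x), v⁆ ∈ S := by
    intro v hv
    obtain ⟨b, hb, t, ht, rfl⟩ := Submodule.mem_sup.mp hv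
    obtain ⟨d, rfl⟩ := Submodule.mem_span_singleton.mp hb
    rw [lie_add, lie_smul, lie_self, smul_zero, zero_add]
    exact hK t ht
  have hsv : ∀ s ∈ S, ∀ v ∈ M, ⁅s, v⁆ ∈ S := by
    intro s hs v hv
    obtain ⟨b, hb, t, ht, rfl⟩ := Submodule.mem_sup.mp hv
    obtain ⟨d, rfl⟩ := Submodule.mem_span_singleton.mp hb
    rw [lie_add, lie_smul, (lie_skew s (π (of C x))).symm]
    exact S.add_mem (S.smul_mem d (S.neg_mem (hK s hs))) (S.lie_mem hs ht)
  have hMlie : ∀ u v : LocLie C A (holRel C), u ∈ M → v ∈ M → ⁅u, v⁆ ∈ S := by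
    intro u v hu hv
    obtain ⟨a, ha, s, hs, rfl⟩ := Submodule.mem_sup.mp hu
    obtain ⟨c, rfl⟩ := Submodule.mem_span_singleton.mp ha
    rw [add_lie, smul_lie]
    exact S.add_mem (S.smul_mem c (hxv v hv)) (hsv s hs v hv)
  have htop : ∀ u : LocLie C A (holRel C), u ∈ M := by
    let MS : LieSubalgebra C (LocLie C A (holRel C)) :=
      { M with lie_mem' := fun {a b} ha hb =>
          (le_sup_right : S.toSubmodule ≤ M) (hMlie a b ha hb) }
    intro u
    obtain ⟨w, rfl⟩ := LieSubmodule.Quotient.surjective_mk' (locIdeal C A (holRel C)) u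
    have hw : w ∈ LieSubalgebra.lieSpan C (FreeLieAlgebra C A)
        (Set.range (FreeLieAlgebra.of C)) := by
      rw [myLieSpanRangeOf]; trivial
    have hcom : LieSubalgebra.lieSpan C (FreeLieAlgebra C A)
        (Set.range (FreeLieAlgebra.of C)) ≤ MS.comap πh := by
      rw [LieSubalgebra.lieSpan_le]
      rintro z ⟨a, rfl⟩
      show πh (of C a) ∈ MS
      by_cases hax : a = x
      · rw [hax]
        exact (le_sup_left : Submodule.span C {π (of C x)} ≤ M)
          (Submodule.mem_span_singleton_self _)
      · exact (le_sup_right : S.toSubmodule ≤ M) (hgen a hax)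
    exact hcom hw
  rw [LieAlgebra.derivedSeries_def, LieAlgebra.derivedSeriesOfIdeal_succ,
    LieAlgebra.derivedSeriesOfIdeal_zero] at hu
  have hu' : u ∈ (⁅(⊤ : LieIdeal C (LocLie C A (holRel C))),
      (⊤ : LieIdeal C (LocLie C A (holRel C)))⁆ :
        LieIdeal C (LocLie C A (holRel C))) := hu
  rw [← LieSubmodule.mem_toSubmodule, LieSubmodule.lieIdeal_oper_eq_linear_span'] at hu'
  have hspan : Submodule.span C
      {m | ∃ y ∈ (⊤ : LieIdeal C (LocLie C A (holRel C))),
        ∃ n ∈ (⊤ : LieIdeal C (LocLie C A (holRel C))), ⁅y, n⁆ = m} ≤ S.toSubmodule := by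
    rw [Submodule.span_le]
    rintro m ⟨y, -, n, -, rfl⟩
    exact hMlie y n (htop y) (htop n)
  exact hspan hu'
end

section
/- Let L be a Lie algebra of a set-arrangement 𝒜 on X satisfying the replacement condition, suppose all two-element members of 𝒜 are pairwise disjoint, and suppose that for every A ∈ 𝒜 there is at most one B ∈ 𝒜 with |B| = 2 and A ∩ B ≠ ∅. If [x,[y,z]] = 0 in L for every A ∈ 𝒜, all y, z ∈ A, and all x ∈ X \ A, then [x, im(s_A')] = 0 for all A ∈ 𝒜 and all x ∈ X \ A. -/
open FreeLieAlgebra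

variable (C : Type*) [CommRing C] {X : Type*}

section Statement9Aux

variable {C : Type*} [CommRing C] {X : Type*}

/-- The quotient map by a Lie ideal, as a morphism of Lie algebras. -/
noncomputable def lieIdealMkHom {L : Type*} [LieRing L] [LieAlgebra C L] (I : LieIdeal C L) :
    L →ₗ⁅C⁆ L ⧸ I :=
  { (LieSubmodule.Quotient.mk' I).toLinearMap with
    map_lie' := fun {_ _} => rfl }

lemma isLieMonomial_one_le {u : FreeLieAlgebra C X} {m : ℕ}
    (h : IsLieMonomial C (fun _ => 1) u m) : 1 ≤ m := by
  induction h with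
  | of x => exact le_refl 1
  | lie _ _ ih1 ih2 => omega

lemma isLieMonomial_eq_of {u : FreeLieAlgebra C X} {m : ℕ}
    (h : IsLieMonomial C (fun _ => 1) u m) : m = 1 → ∃ x : X, u = of C x := by
  induction h with
  | of x => exact fun _ => ⟨x, rfl⟩
  | lie h1 h2 _ _ =>
    intro hm
    have := isLieMonomial_one_le h1
    have := isLieMonomial_one_le h2
    omega

lemma lieSpan_range_of_eq_top (C : Type*) [CommRing C] (X : Type*) :
    LieSubalgebra.lieSpan C (FreeLieAlgebra C X) (Set.range (of C)) = ⊤ := by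
  rw [eq_top_iff]
  intro u _
  have hmem : ∀ x : X, of C x ∈ LieSubalgebra.lieSpan C (FreeLieAlgebra C X) (Set.range (of C)) :=
    fun x => LieSubalgebra.subset_lieSpan ⟨x, rfl⟩
  let K : LieSubalgebra C (FreeLieAlgebra C X) :=
    LieSubalgebra.lieSpan C (FreeLieAlgebra C X) (Set.range (of C))
  let f : FreeLieAlgebra C X →ₗ⁅C⁆ K := lift C fun x => (⟨of C x, hmem x⟩ : K)
  have hcomp : (K.incl.comp f) u = LieHom.id (R := C) u := by
    refine DFunLike.congr_fun (hom_ext fun x => ?_) u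
    show K.incl (f (of C x)) = of C x
    have hfx : f (of C x) = (⟨of C x, hmem x⟩ : K) := lift_of_apply _ x
    rw [hfx]
    rfl
  have hval : (f u : FreeLieAlgebra C X) = u := hcomp
  rw [← hval]
  exact (f u).2

lemma mem_span_monomials (u : FreeLieAlgebra C X) :
    u ∈ Submodule.span C {v : FreeLieAlgebra C X | ∃ n, IsLieMonomial C (fun _ => 1) v n} := by
  have hbr : ∀ a ∈ Submodule.span C
        {v : FreeLieAlgebra C X | ∃ n, IsLieMonomial C (fun _ => 1) v n},
      ∀ b ∈ Submodule.span C {v : FreeLieAlgebra C X | ∃ n, IsLieMonomial C (fun _ => 1) v n},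
      ⁅a, b⁆ ∈ Submodule.span C
        {v : FreeLieAlgebra C X | ∃ n, IsLieMonomial C (fun _ => 1) v n} := by
    intro a ha b hb
    induction hb using Submodule.span_induction with
    | mem b hbm =>
      induction ha using Submodule.span_induction with
      | mem a ham =>
        exact Submodule.subset_span
          ⟨ham.choose + hbm.choose, IsLieMonomial.lie ham.choose_spec hbm.choose_spec⟩
      | zero => rw [zero_lie]; exact Submodule.zero_mem _
      | add x y hx hy ihx ihy => rw [add_lie]; exact Submodule.add_mem _ ihx ihy
      | smul c x hx ihx => rw [smul_lie]; exact Submodule.smul_mem _ _ ihx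
    | zero => rw [lie_zero]; exact Submodule.zero_mem _
    | add x y hx hy ihx ihy => rw [lie_add]; exact Submodule.add_mem _ ihx ihy
    | smul c x hx ihx => rw [lie_smul]; exact Submodule.smul_mem _ _ ihx
  let K : LieSubalgebra C (FreeLieAlgebra C X) :=
    { Submodule.span C {v : FreeLieAlgebra C X | ∃ n, IsLieMonomial C (fun _ => 1) v n} with
      lie_mem' := fun {a b} ha hb => hbr a ha b hb }
  have hle : LieSubalgebra.lieSpan C (FreeLieAlgebra C X) (Set.range (of C)) ≤ K := by
    rw [LieSubalgebra.lieSpan_le]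
    rintro _ ⟨x, rfl⟩
    exact Submodule.subset_span ⟨1, IsLieMonomial.of x⟩
  exact hle (by rw [lieSpan_range_of_eq_top C X]; exact LieSubalgebra.mem_top u)

lemma mem_derived_one {L : Type*} [LieRing L] [LieAlgebra C L] (p q : L) :
    ⁅p, q⁆ ∈ LieAlgebra.derivedSeries C L 1 := by
  rw [LieAlgebra.derivedSeries_def, LieAlgebra.derivedSeriesOfIdeal_succ,
    LieAlgebra.derivedSeriesOfIdeal_zero]
  exact LieSubmodule.lie_mem_lie (LieSubmodule.mem_top p) (LieSubmodule.mem_top q)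

lemma centralizer_lieSpan_map {L L' : Type*} [LieRing L] [LieAlgebra C L]
    [LieRing L'] [LieAlgebra C L'] (f : L →ₗ⁅C⁆ L') (c : L') (S : Set L)
    (h : ∀ z ∈ S, ⁅c, f z⁆ = 0) :
    ∀ v ∈ LieSubalgebra.lieSpan C L S, ⁅c, f v⁆ = 0 := by
  intro v hv
  refine LieSubalgebra.lieSpan_induction (R := C) (p := fun w _ => ⁅c, f w⁆ = 0)
    (fun z hz => h z hz) ?_ ?_ ?_ ?_ hv
  · show ⁅c, f 0⁆ = 0
    rw [map_zero, lie_zero]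
  · intro x y _ _ hx hy
    show ⁅c, f (x + y)⁆ = 0
    rw [map_add, lie_add, hx, hy, add_zero]
  · intro r x _ hx
    show ⁅c, f (r • x)⁆ = 0
    rw [map_smul, lie_smul, hx, smul_zero]
  · intro x y _ _ hx hy
    show ⁅c, f ⁅x, y⁆⁆ = 0
    rw [LieHom.map_lie, leibniz_lie, hx, hy, zero_lie, lie_zero, add_zero]

lemma arr_rel_zero (𝒜 : Set (Set X)) (Rel : ∀ A : Set X, Set (FreeLieAlgebra C A))
    {x y : X} (h : ∀ A ∈ 𝒜, ¬({x, y} : Set X) ⊆ A) :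
    ⁅arrMk C 𝒜 Rel (of C x), arrMk C 𝒜 Rel (of C y)⁆ = 0 := by
  have hmem : ⁅of C x, of C y⁆ ∈ definingIdeal C 𝒜 Rel :=
    LieSubmodule.subset_lieSpan (Or.inl ⟨x, y, h, rfl⟩)
  calc ⁅arrMk C 𝒜 Rel (of C x), arrMk C 𝒜 Rel (of C y)⁆
      = arrMk C 𝒜 Rel ⁅of C x, of C y⁆ := rfl
    _ = 0 := (LieSubmodule.Quotient.mk_eq_zero' (N := definingIdeal C 𝒜 Rel)).mpr hmem

lemma crux_statement9 {𝒜 : Set (Set X)} {Rel : ∀ A : Set X, Set (FreeLieAlgebra C A)}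
    (h𝒜 : IsSetArrangement 𝒜) (hrep : ReplacementCond C 𝒜 Rel)
    (htwo : ∀ A ∈ 𝒜, ∀ B ∈ 𝒜, A.ncard = 2 → B.ncard = 2 → A ≠ B → A ∩ B = ∅)
    (s : ∀ A : 𝒜, LocLie C (A : Set X) Rel →ₗ⁅C⁆ ArrLie C 𝒜 Rel)
    (hs : ∀ (A : 𝒜) (a : (A : Set X)),
      s A (locMk C (A : Set X) Rel (of C a)) = arrMk C 𝒜 Rel (of C (a : X)))
    (h6 : ∀ A ∈ 𝒜, ∀ y ∈ A, ∀ z ∈ A, ∀ x : X, x ∉ A →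
      ⁅arrMk C 𝒜 Rel (of C x), ⁅arrMk C 𝒜 Rel (of C y), arrMk C 𝒜 Rel (of C z)⁆⁆ = 0)
    {A : Set X} (hA : A ∈ 𝒜) {x : X} (hx : x ∉ A) {g : X} (hg : g ∈ A)
    {V : ArrLie C 𝒜 Rel}
    (hV1 : ∃ w ∈ LieAlgebra.derivedSeries C (LocLie C A Rel) 1, s ⟨A, hA⟩ w = V)
    (hV2 : ∀ b : X, b ∉ A → ⁅arrMk C 𝒜 Rel (of C b), V⁆ = 0) :
    ⁅⁅arrMk C 𝒜 Rel (of C x), arrMk C 𝒜 Rel (of C g)⁆, V⁆ = 0 := by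
  by_cases hB : ∃ B ∈ 𝒜, ({x, g} : Set X) ⊆ B
  · obtain ⟨B, hBm, hsub⟩ := hB
    have hxB : x ∈ B := hsub (Set.mem_insert x _)
    have hgB : g ∈ B := hsub (Set.mem_insert_of_mem _ rfl)
    have hBA : B ≠ A := fun h => hx (h ▸ hxB)
    have hsing : (A ∩ B).Subsingleton := h𝒜.2.1 A hA B hBm (Ne.symm hBA)
    have hgAB : g ∈ A ∩ B := ⟨hg, hgB⟩
    by_cases hB3 : 3 ≤ B.ncard
    · have hrepB := hrep B hBm hB3 g hgB ⟨A, hA, Ne.symm hBA, hg⟩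
      have hPd : (locMk C B Rel ⁅of C (⟨x, hxB⟩ : B), of C (⟨g, hgB⟩ : B)⁆ :
          LocLie C B Rel) ∈ LieAlgebra.derivedSeries C (LocLie C B Rel) 1 :=
        mem_derived_one (C := C) (locMk C B Rel (of C (⟨x, hxB⟩ : B)))
          (locMk C B Rel (of C (⟨g, hgB⟩ : B)))
      have hmem := hrepB hPd
      have h0 : ∀ z ∈ {z : LocLie C B Rel | ∃ b : B, (b : X) ≠ g ∧ z = locMk C B Rel (of C b)},
          ⁅V, (s ⟨B, hBm⟩) z⁆ = 0 := by
        rintro z ⟨b, hbne, rfl⟩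
        have hbA : (b : X) ∉ A := fun hbA => hbne (hsing ⟨hbA, b.2⟩ hgAB)
        rw [hs ⟨B, hBm⟩ b, ← lie_skew, hV2 b hbA, neg_zero]
      have hcz := centralizer_lieSpan_map (s ⟨B, hBm⟩) V _ h0 _ hmem
      have hc : (s ⟨B, hBm⟩) (locMk C B Rel ⁅of C (⟨x, hxB⟩ : B), of C (⟨g, hgB⟩ : B)⁆)
          = ⁅arrMk C 𝒜 Rel (of C x), arrMk C 𝒜 Rel (of C g)⁆ := by
        rw [show (locMk C B Rel ⁅of C (⟨x, hxB⟩ : B), of C (⟨g, hgB⟩ : B)⁆ : LocLie C B Rel)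
              = ⁅locMk C B Rel (of C (⟨x, hxB⟩ : B)), locMk C B Rel (of C (⟨g, hgB⟩ : B))⁆
            from rfl, LieHom.map_lie, hs ⟨B, hBm⟩, hs ⟨B, hBm⟩]
      rw [← hc, ← lie_skew, hcz, neg_zero]
    · have hB2 : B.ncard = 2 := by
        have := h𝒜.1 B hBm
        omega
      have hA3 : 3 ≤ A.ncard := by
        by_contra hA3
        have hAc : A.ncard = 2 := by have := h𝒜.1 A hA; omega
        have hemp := htwo A hA B hBm hAc hB2 (Ne.symm hBA)
        exact absurd (hemp ▸ hgAB) (Set.notMem_empty g)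
      have hrepA := hrep A hA hA3 g hg ⟨B, hBm, hBA, hgB⟩
      obtain ⟨w, hwd, rfl⟩ := hV1
      have hmem := hrepA hwd
      have h0 : ∀ z ∈ {z : LocLie C A Rel | ∃ a : A, (a : X) ≠ g ∧ z = locMk C A Rel (of C a)},
          ⁅⁅arrMk C 𝒜 Rel (of C x), arrMk C 𝒜 Rel (of C g)⁆, (s ⟨A, hA⟩) z⁆ = 0 := by
        rintro z ⟨a, hane, rfl⟩
        have haB : (a : X) ∉ B := fun haB => hane (hsing ⟨a.2, haB⟩ hgAB)
        rw [hs ⟨A, hA⟩ a, ← lie_skew, h6 B hBm x hxB g hgB (a : X) haB, neg_zero]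
      exact centralizer_lieSpan_map (s ⟨A, hA⟩) _ _ h0 w hmem
  · push_neg at hB
    rw [arr_rel_zero 𝒜 Rel hB, zero_lie]

lemma key_monomial_statement9 {𝒜 : Set (Set X)} {Rel : ∀ A : Set X, Set (FreeLieAlgebra C A)}
    (h𝒜 : IsSetArrangement 𝒜) (hrep : ReplacementCond C 𝒜 Rel)
    (htwo : ∀ A ∈ 𝒜, ∀ B ∈ 𝒜, A.ncard = 2 → B.ncard = 2 → A ≠ B → A ∩ B = ∅)
    (s : ∀ A : 𝒜, LocLie C (A : Set X) Rel →ₗ⁅C⁆ ArrLie C 𝒜 Rel)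
    (hs : ∀ (A : 𝒜) (a : (A : Set X)),
      s A (locMk C (A : Set X) Rel (of C a)) = arrMk C 𝒜 Rel (of C (a : X)))
    (h6 : ∀ A ∈ 𝒜, ∀ y ∈ A, ∀ z ∈ A, ∀ x : X, x ∉ A →
      ⁅arrMk C 𝒜 Rel (of C x), ⁅arrMk C 𝒜 Rel (of C y), arrMk C 𝒜 Rel (of C z)⁆⁆ = 0) :
    ∀ m : ℕ, ∀ A : Set X, ∀ hA : A ∈ 𝒜, ∀ x : X, x ∉ A →
      ∀ u : FreeLieAlgebra C A, IsLieMonomial C (fun _ => 1) u m → 2 ≤ m →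
      ⁅arrMk C 𝒜 Rel (of C x), (s ⟨A, hA⟩) (locMk C A Rel u)⁆ = 0 := by
  intro m
  induction m using Nat.strong_induction_on with
  | _ m IH =>
    intro A hA x hx u hu h2m
    cases hu with
    | of y => exact absurd h2m (by simp)
    | lie h1 h2 =>
      rename_i u1 u2 m1 m2
      have hp1 := isLieMonomial_one_le h1
      have hp2 := isLieMonomial_one_le h2
      have hbr : ∀ w1 w2 : FreeLieAlgebra C A,
          (s ⟨A, hA⟩) (locMk C A Rel ⁅w1, w2⁆)
            = ⁅(s ⟨A, hA⟩) (locMk C A Rel w1), (s ⟨A, hA⟩) (locMk C A Rel w2)⁆ :=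
        fun w1 w2 => LieHom.map_lie (s ⟨A, hA⟩) (locMk C A Rel w1) (locMk C A Rel w2)
      rw [hbr u1 u2]
      by_cases hm1 : m1 = 1
      · obtain ⟨g, rfl⟩ := isLieMonomial_eq_of h1 hm1
        by_cases hm2 : m2 = 1
        · obtain ⟨h', rfl⟩ := isLieMonomial_eq_of h2 hm2
          rw [hs ⟨A, hA⟩ g, hs ⟨A, hA⟩ h']
          exact h6 A hA g g.2 h' h'.2 x hx
        · have hm2' : 2 ≤ m2 := by omega
          have hIH2 : ∀ b : X, b ∉ A →
              ⁅arrMk C 𝒜 Rel (of C b), (s ⟨A, hA⟩) (locMk C A Rel u2)⁆ = 0 :=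
            fun b hb => IH m2 (by omega) A hA b hb u2 h2 hm2'
          have hu2d : (locMk C A Rel u2 : LocLie C A Rel) ∈
              LieAlgebra.derivedSeries C (LocLie C A Rel) 1 := by
            cases h2 with
            | of y => exact absurd hm2' (by simp)
            | lie ha hb =>
              rename_i a b ma mb
              rw [show (locMk C A Rel ⁅a, b⁆ : LocLie C A Rel)
                    = ⁅locMk C A Rel a, locMk C A Rel b⁆ from rfl]
              exact mem_derived_one (C := C) _ _
          rw [hs ⟨A, hA⟩ g, leibniz_lie,
            crux_statement9 h𝒜 hrep htwo s hs h6 hA hx g.2 ⟨locMk C A Rel u2, hu2d, rfl⟩ hIH2,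
            hIH2 x hx, lie_zero, zero_add]
      · by_cases hm2 : m2 = 1
        · obtain ⟨g, rfl⟩ := isLieMonomial_eq_of h2 hm2
          have hm1' : 2 ≤ m1 := by omega
          have hIH1 : ∀ b : X, b ∉ A →
              ⁅arrMk C 𝒜 Rel (of C b), (s ⟨A, hA⟩) (locMk C A Rel u1)⁆ = 0 :=
            fun b hb => IH m1 (by omega) A hA b hb u1 h1 hm1'
          have hu1d : (locMk C A Rel u1 : LocLie C A Rel) ∈
              LieAlgebra.derivedSeries C (LocLie C A Rel) 1 := by
            cases h1 with
            | of y => exact absurd hm1' (by simp)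
            | lie ha hb =>
              rename_i a b ma mb
              rw [show (locMk C A Rel ⁅a, b⁆ : LocLie C A Rel)
                    = ⁅locMk C A Rel a, locMk C A Rel b⁆ from rfl]
              exact mem_derived_one (C := C) _ _
          rw [hs ⟨A, hA⟩ g,
            ← lie_skew ((s ⟨A, hA⟩) (locMk C A Rel u1)) (arrMk C 𝒜 Rel (of C (g : X))),
            lie_neg, leibniz_lie,
            crux_statement9 h𝒜 hrep htwo s hs h6 hA hx g.2 ⟨locMk C A Rel u1, hu1d, rfl⟩ hIH1,
            hIH1 x hx, lie_zero, zero_add, neg_zero]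
        · have hm1' : 2 ≤ m1 := by omega
          have hm2' : 2 ≤ m2 := by omega
          rw [leibniz_lie, IH m1 (by omega) A hA x hx u1 h1 hm1',
            IH m2 (by omega) A hA x hx u2 h2 hm2', zero_lie, lie_zero, add_zero]

end Statement9Aux

/-- Theorem 2.9(ii): if `L` satisfies the replacement condition, all two-element members of `𝒜`
are pairwise disjoint, for every `A ∈ 𝒜` there is at most one `B ∈ 𝒜` with `|B| = 2` and
`A ∩ B ≠ ∅`, and `⁅x, ⁅y, z⁆⁆ = 0` for all `A ∈ 𝒜`, `y, z ∈ A` and `x ∈ X \ A`, then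
`[x, im(s_A')] = 0` for all `A ∈ 𝒜` and `x ∈ X \ A`. -/
theorem statement9 {C : Type*} [CommRing C] {X : Type*} [Fintype X]
    (𝒜 : Set (Set X)) (Rel : ∀ A : Set X, Set (FreeLieAlgebra C A))
    (h𝒜 : IsSetArrangement 𝒜) (hRel : AdmissibleRel C 𝒜 Rel)
    (hrep : ReplacementCond C 𝒜 Rel)
    (htwo : ∀ A ∈ 𝒜, ∀ B ∈ 𝒜, A.ncard = 2 → B.ncard = 2 → A ≠ B → A ∩ B = ∅)
    (hone : ∀ A ∈ 𝒜, ∀ B₁ ∈ 𝒜, ∀ B₂ ∈ 𝒜, B₁.ncard = 2 → B₂.ncard = 2 →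
      (A ∩ B₁).Nonempty → (A ∩ B₂).Nonempty → B₁ = B₂)
    (s : ∀ A : 𝒜, LocLie C (A : Set X) Rel →ₗ⁅C⁆ ArrLie C 𝒜 Rel)
    (hs : ∀ (A : 𝒜) (a : (A : Set X)),
      s A (locMk C (A : Set X) Rel (of C a)) = arrMk C 𝒜 Rel (of C (a : X)))
    (h6 : ∀ A ∈ 𝒜, ∀ y ∈ A, ∀ z ∈ A, ∀ x : X, x ∉ A →
      ⁅arrMk C 𝒜 Rel (of C x), ⁅arrMk C 𝒜 Rel (of C y), arrMk C 𝒜 Rel (of C z)⁆⁆ = 0) :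
    ∀ (A : 𝒜) (x : X), x ∉ (A : Set X) →
      ∀ r ∈ s A ''
        (LieAlgebra.derivedSeries C (LocLie C (A : Set X) Rel) 1 : Set (LocLie C (A : Set X) Rel)),
        ⁅arrMk C 𝒜 Rel (of C x), r⁆ = 0 := by
  classical
  intro A x hx r hr
  obtain ⟨Aval, hAval⟩ := A
  obtain ⟨w, hw, rfl⟩ := hr
  have key := key_monomial_statement9 h𝒜 hrep htwo s hs h6
  let T : FreeLieAlgebra C Aval →ₗ⁅C⁆ ArrLie C 𝒜 Rel :=
    (s ⟨Aval, hAval⟩).comp (lieIdealMkHom (locIdeal C Aval Rel))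
  have hmain : ∀ p q : LocLie C Aval Rel,
      ⁅arrMk C 𝒜 Rel (of C x), (s ⟨Aval, hAval⟩) ⁅p, q⁆⁆ = 0 := by
    intro p q
    obtain ⟨P, rfl⟩ := LieSubmodule.Quotient.surjective_mk' (locIdeal C Aval Rel) p
    obtain ⟨Q, rfl⟩ := LieSubmodule.Quotient.surjective_mk' (locIdeal C Aval Rel) q
    have hPQ : ∀ u : FreeLieAlgebra C Aval,
        u ∈ Submodule.span C
          {v : FreeLieAlgebra C Aval | ∃ n, IsLieMonomial C (fun _ => 1) v n} →
        ∀ v : FreeLieAlgebra C Aval,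
        v ∈ Submodule.span C
          {v : FreeLieAlgebra C Aval | ∃ n, IsLieMonomial C (fun _ => 1) v n} →
        ⁅arrMk C 𝒜 Rel (of C x), T ⁅u, v⁆⁆ = 0 := by
      intro u hu
      induction hu using Submodule.span_induction with
      | mem u hum =>
        intro v hv
        induction hv using Submodule.span_induction with
        | mem v hvm =>
          obtain ⟨mu, humo⟩ := hum
          obtain ⟨mv, hvmo⟩ := hvm
          have h1 := isLieMonomial_one_le humo
          have h2 := isLieMonomial_one_le hvmo
          exact key (mu + mv) Aval hAval x hx ⁅u, v⁆ (IsLieMonomial.lie humo hvmo) (by omega)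
        | zero => rw [lie_zero, map_zero, lie_zero]
        | add v1 v2 hv1 hv2 ih1 ih2 => rw [lie_add, map_add, lie_add, ih1, ih2, add_zero]
        | smul c v1 hv1 ih => rw [lie_smul, map_smul, lie_smul, ih, smul_zero]
      | zero => intro v hv; rw [zero_lie, map_zero, lie_zero]
      | add u1 u2 hu1 hu2 ih1 ih2 =>
        intro v hv
        rw [add_lie, map_add, lie_add, ih1 v hv, ih2 v hv, add_zero]
      | smul c u1 hu1 ih =>
        intro v hv
        rw [smul_lie, map_smul, lie_smul, ih v hv, smul_zero]
    show ⁅arrMk C 𝒜 Rel (of C x), T ⁅P, Q⁆⁆ = 0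
    exact hPQ P (mem_span_monomials P) Q (mem_span_monomials Q)
  have hv : w ∈ LieAlgebra.derivedSeries C (LocLie C ((⟨Aval, hAval⟩ : 𝒜) : Set X) Rel) 1 := hw
  rw [LieAlgebra.derivedSeries_def, LieAlgebra.derivedSeriesOfIdeal_succ,
    LieAlgebra.derivedSeriesOfIdeal_zero, ← LieSubmodule.mem_toSubmodule,
    LieSubmodule.lieIdeal_oper_eq_linear_span'] at hv
  refine Submodule.span_induction ?_ ?_ ?_ ?_ hv
  · rintro _ ⟨a, -, b, -, rfl⟩
    exact hmain a b
  · rw [map_zero, lie_zero]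
  · intro a b ha hb iha ihb
    rw [map_add, lie_add, iha, ihb, add_zero]
  · intro c v1 hv1 ih
    rw [map_smul, lie_smul, ih, smul_zero]
end

section
/- Let L be a Lie algebra of a set-arrangement 𝒜 on X and let ℬ be a closed sub-arrangement of 𝒜. The Lie algebra morphism from the free Lie algebra F(X) to L_ℬ sending each generator in supp(ℬ) to its class and every generator outside supp(ℬ) to zero annihilates the defining ideal of L, hence induces a Lie algebra morphism π_ℬ : L → L_ℬ with π_ℬ ∘ s_ℬ = id_{L_ℬ}. Consequently s_ℬ is injective, π_ℬ is surjective, and ker(π_ℬ) is the ideal of L generated by the images of the generators in X \ supp(ℬ). -/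
open FreeLieAlgebra

variable (C : Type*) [CommRing C] {X : Type*}

/-- The quotient map by a Lie ideal, as a Lie algebra morphism. -/
noncomputable def ideQ {R L : Type*} [CommRing R] [LieRing L] [LieAlgebra R L]
    (I : LieIdeal R L) : L →ₗ⁅R⁆ L ⧸ I :=
  { (I : Submodule R L).mkQ with map_lie' := rfl }

theorem ideQ_apply {R L : Type*} [CommRing R] [LieRing L] [LieAlgebra R L]
    (I : LieIdeal R L) (x : L) : ideQ I x = LieSubmodule.Quotient.mk (N := I) x := rfl

/-- A Lie hom from a free Lie algebra whose generator images pairwise commute kills the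
derived subalgebra. -/
theorem lift_commuting_derived_eq_zero {R Y L : Type*} [CommRing R] [LieRing L] [LieAlgebra R L]
    (ψ : FreeLieAlgebra R Y →ₗ⁅R⁆ L)
    (hcomm : ∀ a b : Y, ⁅ψ (of R a), ψ (of R b)⁆ = 0)
    {r : FreeLieAlgebra R Y}
    (hr : r ∈ LieAlgebra.derivedSeries R (FreeLieAlgebra R Y) 1) :
    ψ r = 0 := by
  set f : Y → L := fun a => ψ (of R a) with hf
  have hspan : ∀ u ∈ Submodule.span R (Set.range f), ∀ v ∈ Submodule.span R (Set.range f),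
      ⁅u, v⁆ = (0 : L) := by
    intro u hu v hv
    induction hu using Submodule.span_induction with
    | mem u hu =>
      induction hv using Submodule.span_induction with
      | mem v hv =>
        obtain ⟨a, rfl⟩ := hu; obtain ⟨b, rfl⟩ := hv; exact hcomm a b
      | zero => simp
      | add v w _ _ hv hw => rw [lie_add, hv, hw, add_zero]
      | smul t v _ hv => rw [lie_smul, hv, smul_zero]
    | zero => simp
    | add u w _ _ hu hw => rw [add_lie, hu, hw, add_zero]
    | smul t u _ hu => rw [smul_lie, hu, smul_zero]
  set K : LieSubalgebra R L :=
    { Submodule.span R (Set.range f) with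
      lie_mem' := by
        intro u v hu hv
        have : ⁅u, v⁆ = (0:L) := hspan u hu v hv
        show ⁅u, v⁆ ∈ Submodule.span R (Set.range f)
        rw [this]; exact zero_mem _ } with hK
  haveI : IsLieAbelian K := by
    constructor
    intro x y
    apply Subtype.ext
    rw [LieSubalgebra.coe_bracket]
    exact hspan x.1 x.2 y.1 y.2
  haveI : IsLieAbelian (⊤ : LieIdeal R K) :=
    (lie_abelian_iff_equiv_lie_abelian LieIdeal.topEquiv).mpr this
  have hder : LieAlgebra.derivedSeries R K 1 = ⊥ :=
    (LieAlgebra.abelian_iff_derived_one_eq_bot (⊤ : LieIdeal R K)).mp this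
  set g : FreeLieAlgebra R Y →ₗ⁅R⁆ K :=
    lift R (fun a => (⟨f a, Submodule.subset_span ⟨a, rfl⟩⟩ : K))
  have hfac : ψ = K.incl.comp g := by
    apply FreeLieAlgebra.hom_ext
    intro a
    simp [g]
    rfl
  have hg : g r ∈ LieAlgebra.derivedSeries R K 1 :=
    LieIdeal.derivedSeries_map_le 1 (LieIdeal.mem_map hr)
  rw [hder] at hg
  rw [hfac]
  simp only [LieHom.comp_apply]
  rw [(LieSubmodule.mem_bot _).mp hg]
  simp

/-- For a closed sub-arrangement `ℬ` of `𝒜`, the morphism `F(X) → L_ℬ` killing the generators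
outside `supp ℬ` annihilates the defining ideal of `L`, hence induces `π_ℬ : L → L_ℬ` with
`π_ℬ ∘ s_ℬ = id`; consequently `s_ℬ` is injective, `π_ℬ` is surjective, and `ker π_ℬ` is the
ideal of `L` generated by the images of the generators in `X \ supp ℬ`. -/


theorem statement10 {C : Type*} [CommRing C] {X : Type*} [Fintype X]
    (𝒜 : Set (Set X)) (Rel : ∀ A : Set X, Set (FreeLieAlgebra C A))
    (h𝒜 : IsSetArrangement 𝒜) (hRel : AdmissibleRel C 𝒜 Rel)
    (ℬ : Set (Set X)) (hℬ : IsClosedSub 𝒜 ℬ)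
    (sB : SubLie C ℬ Rel →ₗ⁅C⁆ ArrLie C 𝒜 Rel)
    (hsB : ∀ a : arrSupp ℬ, sB (subMk C ℬ Rel (of C a)) = arrMk C 𝒜 Rel (of C (a : X))) :
    (∀ z ∈ definingIdeal C 𝒜 Rel, subProj C ℬ Rel z = 0) ∧
      ∃ πB : ArrLie C 𝒜 Rel →ₗ⁅C⁆ SubLie C ℬ Rel,
        (∀ w : FreeLieAlgebra C X, πB (arrMk C 𝒜 Rel w) = subProj C ℬ Rel w) ∧
        (∀ z : SubLie C ℬ Rel, πB (sB z) = z) ∧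
        Function.Injective sB ∧ Function.Surjective πB ∧
        πB.ker = LieSubmodule.lieSpan C (ArrLie C 𝒜 Rel)
          {z | ∃ x : X, x ∉ arrSupp ℬ ∧ z = arrMk C 𝒜 Rel (of C x)} := by
  classical
  set φ := subProj C ℬ Rel with hφdef
  have hφof : ∀ x : X, φ (of C x) =
      if h : x ∈ arrSupp ℬ then subMk C ℬ Rel (of C (⟨x, h⟩ : arrSupp ℬ)) else 0 := by
    intro x
    rw [hφdef, subProj, lift_of_apply]
  -- Part 1 : φ annihilates the defining ideal
  have hle : definingIdeal C 𝒜 Rel ≤ φ.ker := by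
    rw [definingIdeal, LieSubmodule.lieSpan_le]
    rintro z (⟨x, y, hxy, rfl⟩ | hz)
    · rw [SetLike.mem_coe, LieHom.mem_ker, LieHom.map_lie, hφof, hφof]
      by_cases hx : x ∈ arrSupp ℬ
      · by_cases hy : y ∈ arrSupp ℬ
        · rw [dif_pos hx, dif_pos hy]
          have hmem : (⁅of C (⟨x, hx⟩ : arrSupp ℬ), of C (⟨y, hy⟩ : arrSupp ℬ)⁆ :
              FreeLieAlgebra C (arrSupp ℬ)) ∈ subIdeal C ℬ Rel := by
            apply LieSubmodule.subset_lieSpan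
            exact Or.inr ⟨⟨x, hx⟩, ⟨y, hy⟩, fun B hB hsub => hxy B (hℬ.1 hB) hsub, rfl⟩
          show ⁅LieSubmodule.Quotient.mk (N := subIdeal C ℬ Rel) (of C (⟨x, hx⟩ : arrSupp ℬ)),
              LieSubmodule.Quotient.mk (N := subIdeal C ℬ Rel) (of C (⟨y, hy⟩ : arrSupp ℬ))⁆ = 0
          rw [← LieSubmodule.Quotient.mk_bracket, LieSubmodule.Quotient.mk_eq_zero']
          exact hmem
        · rw [dif_neg hy, lie_zero]
      · rw [dif_neg hx, zero_lie]
    · simp only [Set.mem_iUnion] at hz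
      obtain ⟨A, hA, r, hr, rfl⟩ := hz
      rw [SetLike.mem_coe, LieHom.mem_ker]
      by_cases hAB : A ∈ ℬ
      · have hsub : A ⊆ arrSupp ℬ := Set.subset_sUnion_of_mem hAB
        have key : φ.comp (inclX C A) =
            (ideQ (subIdeal C ℬ Rel)).comp (inclSub C hsub) := by
          apply FreeLieAlgebra.hom_ext
          intro a
          simp only [LieHom.comp_apply, inclX, inclSub, lift_of_apply, hφof, ideQ_apply]
          rw [dif_pos (hsub a.2)]
          rfl
        have h1 : φ (inclX C A r) = ideQ (subIdeal C ℬ Rel) (inclSub C hsub r) :=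
          LieHom.congr_fun key r
        rw [h1, ideQ_apply, LieSubmodule.Quotient.mk_eq_zero']
        apply LieSubmodule.subset_lieSpan
        apply Or.inl
        exact Set.mem_iUnion.2 ⟨A, Set.mem_iUnion.2 ⟨hAB, ⟨r, hr, rfl⟩⟩⟩
      · have hss : (A ∩ arrSupp ℬ).Subsingleton := hℬ.2 A hA hAB
        have : (φ.comp (inclX C A)) r = 0 := by
          apply lift_commuting_derived_eq_zero
          · intro a b
            simp only [LieHom.comp_apply, inclX, lift_of_apply, hφof]
            by_cases ha : (a : X) ∈ arrSupp ℬ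
            · by_cases hb : (b : X) ∈ arrSupp ℬ
              · rw [dif_pos ha, dif_pos hb]
                have hab : (a : X) = (b : X) := hss ⟨a.2, ha⟩ ⟨b.2, hb⟩
                have : (⟨(a : X), ha⟩ : arrSupp ℬ) = ⟨(b : X), hb⟩ := Subtype.ext hab
                rw [this, lie_self]
              · rw [dif_neg hb, lie_zero]
            · rw [dif_neg ha, zero_lie]
          · exact hRel A hA hr
        exact this
  have hann : ∀ z ∈ definingIdeal C 𝒜 Rel, φ z = 0 := fun z hz =>
    LieHom.mem_ker.mp (hle hz)
  refine ⟨hann, ?_⟩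
  -- construction of πB
  have hle' : (definingIdeal C 𝒜 Rel).toSubmodule ≤ LinearMap.ker φ.toLinearMap := by
    intro w hw
    rw [LinearMap.mem_ker]
    exact hann w hw
  let πB : ArrLie C 𝒜 Rel →ₗ⁅C⁆ SubLie C ℬ Rel :=
    { Submodule.liftQ (definingIdeal C 𝒜 Rel).toSubmodule φ.toLinearMap hle' with
      map_lie' := by
        intro x y
        refine Quotient.inductionOn₂' x y fun a b => ?_
        exact φ.map_lie a b }
  have hπ : ∀ w : FreeLieAlgebra C X, πB (arrMk C 𝒜 Rel w) = φ w := fun w => rfl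
  refine ⟨πB, hπ, ?_⟩
  -- retraction
  have hqhom : πB.comp (sB.comp (ideQ (subIdeal C ℬ Rel))) = ideQ (subIdeal C ℬ Rel) := by
    apply FreeLieAlgebra.hom_ext
    intro a
    simp only [LieHom.comp_apply, ideQ_apply]
    show πB (sB (subMk C ℬ Rel (of C a))) = subMk C ℬ Rel (of C a)
    rw [hsB, hπ, hφof, dif_pos a.2, Subtype.coe_eta]
  have hret : ∀ z : SubLie C ℬ Rel, πB (sB z) = z := by
    intro z
    obtain ⟨w, rfl⟩ := Submodule.Quotient.mk_surjective _ z
    exact LieHom.congr_fun hqhom w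
  have hinj : Function.Injective sB := Function.LeftInverse.injective hret
  have hsurj : Function.Surjective πB := fun z => ⟨sB z, hret z⟩
  refine ⟨hret, hinj, hsurj, ?_⟩
  -- kernel computation
  set J := LieSubmodule.lieSpan C (ArrLie C 𝒜 Rel)
    {z | ∃ x : X, x ∉ arrSupp ℬ ∧ z = arrMk C 𝒜 Rel (of C x)} with hJdef
  have hdiff : ∀ w : FreeLieAlgebra C X, arrMk C 𝒜 Rel w - sB (φ w) ∈ J := by
    have key : (ideQ J).comp (ideQ (definingIdeal C 𝒜 Rel)) =
        (ideQ J).comp (sB.comp φ) := by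
      apply FreeLieAlgebra.hom_ext
      intro x
      simp only [LieHom.comp_apply, ideQ_apply, hφof]
      by_cases hx : x ∈ arrSupp ℬ
      · rw [dif_pos hx]
        have : sB (subMk C ℬ Rel (of C (⟨x, hx⟩ : arrSupp ℬ))) = arrMk C 𝒜 Rel (of C x) :=
          hsB ⟨x, hx⟩
        rw [this]
        rfl
      · rw [dif_neg hx, map_zero sB]
        show LieSubmodule.Quotient.mk (N := J) (arrMk C 𝒜 Rel (of C x)) = 0
        rw [LieSubmodule.Quotient.mk_eq_zero']
        exact LieSubmodule.subset_lieSpan ⟨x, hx, rfl⟩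
    intro w
    have h1 : ideQ J (arrMk C 𝒜 Rel w) = ideQ J (sB (φ w)) := LieHom.congr_fun key w
    have h2 : ideQ J (arrMk C 𝒜 Rel w - sB (φ w)) = 0 := by
      rw [map_sub (ideQ J), h1, sub_self]
    rwa [ideQ_apply, LieSubmodule.Quotient.mk_eq_zero'] at h2
  apply le_antisymm
  · intro z hz
    rw [LieHom.mem_ker] at hz
    obtain ⟨w, rfl⟩ := Submodule.Quotient.mk_surjective _ z
    have hz' : φ w = 0 := hz
    have := hdiff w
    rw [hz', map_zero sB, sub_zero] at this
    exact this
  · rw [LieSubmodule.lieSpan_le]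
    rintro z ⟨x, hx, rfl⟩
    rw [SetLike.mem_coe, LieHom.mem_ker, hπ, hφof, dif_neg hx]
end
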